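/- arXiv:1205.1844 — 7 statements merged into one kernel-verified Lean document; each statement's English description precedes it below -/
import Mathlib

section
/- Let T > 0, 0 < η < T, α > 0, β ≥ 0 be real constants with β ≠ (2T − αη²)/(αη² − 2η + 2T), and set D = (αη² − 2T) − β(2η − αη² − 2T). For every continuous function y : [0,T] → ℝ, the function u : [0,T] → ℝ defined by u(t) = ((β(2T − αη²) − 2β(1 − αη)t)/D) ∫₀^η (η − s) y(s) ds + ((αβη − α(β − 1)t)/D) ∫₀^η (η − s)² y(s) ds + ((2(β − 1)t − 2βη)/D) ∫₀^T (T − s) y(s) ds − ∫₀^t (t − s) y(s) ds is twice continuously differentiable on [0,T] and satisfies u''(t) + y(t) = 0 for all t ∈ (0,T), together with the boundary conditions u(0) = β u(η) and u(T) = α ∫₀^η u(s) ds. -/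
open Set MeasureTheory intervalIntegral

theorem stmt_0 (T η α β : ℝ) (hT : 0 < T) (hη0 : 0 < η) (hηT : η < T)
    (hα : 0 < α) (hβ : 0 ≤ β)
    (hβne : β ≠ (2 * T - α * η ^ 2) / (α * η ^ 2 - 2 * η + 2 * T))
    (D : ℝ) (hD : D = (α * η ^ 2 - 2 * T) - β * (2 * η - α * η ^ 2 - 2 * T))
    (y : ℝ → ℝ) (hy : ContinuousOn y (Set.Icc 0 T))
    (u : ℝ → ℝ)
    (hu : ∀ t : ℝ, u t =
      ((β * (2 * T - α * η ^ 2) - 2 * β * (1 - α * η) * t) / D) *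
        (∫ s in (0:ℝ)..η, (η - s) * y s)
      + ((α * β * η - α * (β - 1) * t) / D) *
        (∫ s in (0:ℝ)..η, (η - s) ^ 2 * y s)
      + ((2 * (β - 1) * t - 2 * β * η) / D) *
        (∫ s in (0:ℝ)..T, (T - s) * y s)
      - ∫ s in (0:ℝ)..t, (t - s) * y s) :
    ∃ u' u'' : ℝ → ℝ,
      (∀ t ∈ Set.Icc (0:ℝ) T, HasDerivWithinAt u (u' t) (Set.Icc 0 T) t) ∧
      (∀ t ∈ Set.Icc (0:ℝ) T, HasDerivWithinAt u' (u'' t) (Set.Icc 0 T) t) ∧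
      ContinuousOn u' (Set.Icc 0 T) ∧
      ContinuousOn u'' (Set.Icc 0 T) ∧
      (∀ t ∈ Set.Ioo (0:ℝ) T, u'' t + y t = 0) ∧
      u 0 = β * u η ∧
      u T = α * ∫ s in (0:ℝ)..η, u s := by
  subst hD
  have h0T : (0:ℝ) ∈ Set.Icc (0:ℝ) T := ⟨le_refl 0, hT.le⟩
  have hηmem : η ∈ Set.Icc (0:ℝ) T := ⟨hη0.le, hηT.le⟩
  have hTmem : T ∈ Set.Icc (0:ℝ) T := ⟨hT.le, le_refl T⟩
  have hK : (0:ℝ) < α * η ^ 2 - 2 * η + 2 * T := by nlinarith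
  have hDne : (α * η ^ 2 - 2 * T) - β * (2 * η - α * η ^ 2 - 2 * T) ≠ 0 := by
    intro h
    apply hβne
    rw [eq_div_iff (ne_of_gt hK)]
    nlinarith
  have hy1 : ContinuousOn (fun s => s * y s) (Set.Icc 0 T) := continuousOn_id.mul hy
  have hy2 : ContinuousOn (fun s : ℝ => s ^ 2 * y s) (Set.Icc 0 T) :=
    (continuousOn_id.pow 2).mul hy
  have hsub : ∀ t ∈ Set.Icc (0:ℝ) T, Set.uIcc 0 t ⊆ Set.Icc (0:ℝ) T :=
    fun t ht => Set.uIcc_subset_Icc h0T ht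
  have hint : ∀ (f : ℝ → ℝ), ContinuousOn f (Set.Icc 0 T) → ∀ t ∈ Set.Icc (0:ℝ) T,
      IntervalIntegrable f volume 0 t :=
    fun f hf t ht => (hf.mono (hsub t ht)).intervalIntegrable
  have key : ∀ (f : ℝ → ℝ), ContinuousOn f (Set.Icc 0 T) → ∀ t ∈ Set.Icc (0:ℝ) T,
      HasDerivWithinAt (fun x => ∫ s in (0:ℝ)..x, f s) (f t) (Set.Icc 0 T) t := by
    intro f hf t ht
    haveI : Fact (t ∈ Set.Icc (0:ℝ) T) := ⟨ht⟩
    exact intervalIntegral.integral_hasDerivWithinAt_right (hint f hf t ht)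
      (hf.stronglyMeasurableAtFilter_nhdsWithin measurableSet_Icc t)
      (hf t ht)
  set F : ℝ → ℝ := fun t => ∫ s in (0:ℝ)..t, y s with hFdef
  set G : ℝ → ℝ := fun t => ∫ s in (0:ℝ)..t, s * y s with hGdef
  set H : ℝ → ℝ := fun t => ∫ s in (0:ℝ)..t, s ^ 2 * y s with hHdef
  have hF : ∀ t ∈ Set.Icc (0:ℝ) T, HasDerivWithinAt F (y t) (Set.Icc 0 T) t := key y hy
  have hG : ∀ t ∈ Set.Icc (0:ℝ) T, HasDerivWithinAt G (t * y t) (Set.Icc 0 T) t := key _ hy1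
  have hH : ∀ t ∈ Set.Icc (0:ℝ) T, HasDerivWithinAt H (t ^ 2 * y t) (Set.Icc 0 T) t := key _ hy2
  have hFc : ContinuousOn F (Set.Icc 0 T) := fun t ht => (hF t ht).continuousWithinAt
  have hGc : ContinuousOn G (Set.Icc 0 T) := fun t ht => (hG t ht).continuousWithinAt
  have hHc : ContinuousOn H (Set.Icc 0 T) := fun t ht => (hH t ht).continuousWithinAt
  have hsplit : ∀ t ∈ Set.Icc (0:ℝ) T,
      (∫ s in (0:ℝ)..t, (t - s) * y s) = t * F t - G t := by
    intro t ht
    have h1 : IntervalIntegrable (fun s => t * y s) volume 0 t := (hint y hy t ht).const_mul t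
    have h2 := hint _ hy1 t ht
    calc (∫ s in (0:ℝ)..t, (t - s) * y s)
        = ∫ s in (0:ℝ)..t, (t * y s - s * y s) := by
          apply intervalIntegral.integral_congr
          intro s _
          ring
      _ = (∫ s in (0:ℝ)..t, t * y s) - ∫ s in (0:ℝ)..t, s * y s :=
          intervalIntegral.integral_sub h1 h2
      _ = t * F t - G t := by rw [intervalIntegral.integral_const_mul]
  set I1 := ∫ s in (0:ℝ)..η, (η - s) * y s with hI1
  set I2 := ∫ s in (0:ℝ)..η, (η - s) ^ 2 * y s with hI2
  set I3 := ∫ s in (0:ℝ)..T, (T - s) * y s with hI3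
  set Dv : ℝ := (α * η ^ 2 - 2 * T) - β * (2 * η - α * η ^ 2 - 2 * T) with hDv
  set a : ℝ := (-(2 * β * (1 - α * η)) * I1 + (-(α * (β - 1))) * I2 + (2 * (β - 1)) * I3) / Dv
    with ha
  set b : ℝ := (β * (2 * T - α * η ^ 2) * I1 + (α * β * η) * I2 + (-(2 * β * η)) * I3) / Dv
    with hb
  have hv : ∀ t ∈ Set.Icc (0:ℝ) T, u t = a * t + b - (t * F t - G t) := by
    intro t ht
    rw [hu t, hsplit t ht, ha, hb]
    field_simp
    ring
  have hI3' : I3 = T * F T - G T := hI3.trans (hsplit T hTmem)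
  -- derivatives
  have hu'd : ∀ t ∈ Set.Icc (0:ℝ) T,
      HasDerivWithinAt u (a - F t) (Set.Icc 0 T) t := by
    intro t ht
    have h1 : HasDerivWithinAt (fun t : ℝ => a * t + b) a (Set.Icc 0 T) t := by
      simpa using ((hasDerivWithinAt_id t (Set.Icc 0 T)).const_mul a).add_const b
    have h2 : HasDerivWithinAt (fun t : ℝ => t * F t - G t) (F t) (Set.Icc 0 T) t := by
      have h3 := ((hasDerivWithinAt_id t (Set.Icc 0 T)).mul (hF t ht)).sub (hG t ht)
      refine h3.congr_deriv ?_
      simp only [id_eq]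
      ring
    exact (h1.sub h2).congr hv (hv t ht)
  refine ⟨fun t => a - F t, fun t => -y t, hu'd, ?_, ?_, ?_, ?_, ?_, ?_⟩
  · intro t ht
    exact (hF t ht).const_sub a
  · exact continuousOn_const.sub hFc
  · exact hy.neg
  · intro t _
    ring
  · -- u 0 = β * u η
    rw [hu 0, hu η]
    rw [show (∫ s in (0:ℝ)..0, (0 - s) * y s) = 0 from intervalIntegral.integral_same, ← hI1]
    field_simp
    rw [hDv]
    ring
  · -- u T = α * ∫ u
    have hIccsub : Set.Icc (0:ℝ) η ⊆ Set.Icc 0 T := Set.Icc_subset_Icc le_rfl hηT.le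
    have hgc : ContinuousOn (fun s : ℝ => s * F s - G s) (Set.Icc 0 T) :=
      (continuousOn_id.mul hFc).sub hGc
    -- value of ∫₀^η (s F s - G s)
    have hF0 : F 0 = 0 := intervalIntegral.integral_same
    have hG0 : G 0 = 0 := intervalIntegral.integral_same
    have hH0 : H 0 = 0 := intervalIntegral.integral_same
    have hG2 : (∫ s in (0:ℝ)..η, (s * F s - G s))
        = (η ^ 2 * F η - 2 * (η * G η) + H η) / 2 := by
      have hmain := intervalIntegral.integral_eq_sub_of_hasDeriv_right_of_le hη0.le
        (f := fun t => (t ^ 2 * F t - 2 * (t * G t) + H t) / 2)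
        (f' := fun s => s * F s - G s)
        ?_ ?_ (hint _ hgc η hηmem)
      · rw [hmain]; simp only [hF0, hG0, hH0]; ring
      · apply ContinuousOn.div_const
        apply ContinuousOn.add
        apply ContinuousOn.sub
        · exact ((continuousOn_id.pow 2).mul hFc).mono hIccsub
        · exact ((continuousOn_const.mul (continuousOn_id.mul hGc))).mono hIccsub
        · exact hHc.mono hIccsub
      · intro x hx
        have hxT : x ∈ Set.Icc (0:ℝ) T := ⟨hx.1.le, (hx.2.trans hηT).le⟩
        have hnb : Set.Icc (0:ℝ) T ∈ nhds x := Icc_mem_nhds hx.1 (hx.2.trans hηT)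
        have hF' : HasDerivAt F (y x) x := (hF x hxT).hasDerivAt hnb
        have hG' : HasDerivAt G (x * y x) x := (hG x hxT).hasDerivAt hnb
        have hH' : HasDerivAt H (x ^ 2 * y x) x := (hH x hxT).hasDerivAt hnb
        have hd : HasDerivAt (fun t => (t ^ 2 * F t - 2 * (t * G t) + H t) / 2)
            (x * F x - G x) x := by
          have h4 := ((((hasDerivAt_pow 2 x).mul hF').sub
            (((hasDerivAt_id x).mul hG').const_mul 2)).add hH').div_const 2
          refine h4.congr_deriv ?_
          simp only [id_eq]
          push_cast
          ring
        exact hd.hasDerivWithinAt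
    have hI2' : I2 = η ^ 2 * F η - 2 * (η * G η) + H η := by
      have e1 : IntervalIntegrable (fun s => η ^ 2 * y s) volume 0 η :=
        (hint y hy η hηmem).const_mul _
      have e2 : IntervalIntegrable (fun s => 2 * η * (s * y s)) volume 0 η :=
        (hint _ hy1 η hηmem).const_mul _
      have e3 := hint _ hy2 η hηmem
      calc I2 = ∫ s in (0:ℝ)..η, (η ^ 2 * y s - 2 * η * (s * y s) + s ^ 2 * y s) := by
            rw [hI2]
            apply intervalIntegral.integral_congr
            intro s _
            ring
        _ = ((∫ s in (0:ℝ)..η, η ^ 2 * y s) - ∫ s in (0:ℝ)..η, 2 * η * (s * y s))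
              + ∫ s in (0:ℝ)..η, s ^ 2 * y s := by
            rw [intervalIntegral.integral_add (e1.sub e2) e3,
              intervalIntegral.integral_sub e1 e2]
        _ = η ^ 2 * F η - 2 * (η * G η) + H η := by
            rw [intervalIntegral.integral_const_mul, intervalIntegral.integral_const_mul]
            ring
    have hucong : (∫ s in (0:ℝ)..η, u s)
        = ∫ s in (0:ℝ)..η, (a * s + b - (s * F s - G s)) := by
      apply intervalIntegral.integral_congr
      intro s hs
      rw [Set.uIcc_of_le hη0.le] at hs
      exact hv s (hIccsub hs)
    have hlin : IntervalIntegrable (fun s : ℝ => a * s + b) volume 0 η :=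
      (intervalIntegrable_id.const_mul a).add intervalIntegrable_const
    have huval : (∫ s in (0:ℝ)..η, u s)
        = a * (η ^ 2 / 2) + b * η - (η ^ 2 * F η - 2 * (η * G η) + H η) / 2 := by
      rw [hucong, intervalIntegral.integral_sub hlin (hint _ hgc η hηmem), hG2]
      have : (∫ s in (0:ℝ)..η, (a * s + b)) = a * (η ^ 2 / 2) + b * η := by
        rw [intervalIntegral.integral_add (intervalIntegrable_id.const_mul a)
          (intervalIntegrable_const)]
        rw [intervalIntegral.integral_const_mul, integral_id, intervalIntegral.integral_const]
        simp only [smul_eq_mul]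
        ring
      rw [this]
    rw [hv T hTmem, huval, ← hI2', ← hI3', ha, hb]
    field_simp
    rw [hDv]
    ring
end

section
/- Let T > 0, 0 < η < T, α > 0, β ≥ 0 be real constants with β ≠ (2T − αη²)/(αη² − 2η + 2T), and let y : [0,T] → ℝ be continuous. If u₁ and u₂ are both twice continuously differentiable functions on [0,T] satisfying u''(t) + y(t) = 0 on (0,T), u(0) = β u(η) and u(T) = α ∫₀^η u(s) ds, then u₁ = u₂ on [0,T]. -/
open Set Filter Topology

theorem stmt_1 (T η α β : ℝ) (hT : 0 < T) (hη0 : 0 < η) (hηT : η < T)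
    (hα : 0 < α) (hβ : 0 ≤ β)
    (hβne : β ≠ (2 * T - α * η ^ 2) / (α * η ^ 2 - 2 * η + 2 * T))
    (y : ℝ → ℝ) (hy : ContinuousOn y (Set.Icc 0 T))
    (u₁ u₂ u₁' u₂' u₁'' u₂'' : ℝ → ℝ)
    (h₁d1 : ∀ t ∈ Set.Icc (0:ℝ) T, HasDerivWithinAt u₁ (u₁' t) (Set.Icc 0 T) t)
    (h₁d2 : ∀ t ∈ Set.Icc (0:ℝ) T, HasDerivWithinAt u₁' (u₁'' t) (Set.Icc 0 T) t)
    (h₁c : ContinuousOn u₁'' (Set.Icc 0 T))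
    (h₁ode : ∀ t ∈ Set.Ioo (0:ℝ) T, u₁'' t + y t = 0)
    (h₁bc1 : u₁ 0 = β * u₁ η)
    (h₁bc2 : u₁ T = α * ∫ s in (0:ℝ)..η, u₁ s)
    (h₂d1 : ∀ t ∈ Set.Icc (0:ℝ) T, HasDerivWithinAt u₂ (u₂' t) (Set.Icc 0 T) t)
    (h₂d2 : ∀ t ∈ Set.Icc (0:ℝ) T, HasDerivWithinAt u₂' (u₂'' t) (Set.Icc 0 T) t)
    (h₂c : ContinuousOn u₂'' (Set.Icc 0 T))
    (h₂ode : ∀ t ∈ Set.Ioo (0:ℝ) T, u₂'' t + y t = 0)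
    (h₂bc1 : u₂ 0 = β * u₂ η)
    (h₂bc2 : u₂ T = α * ∫ s in (0:ℝ)..η, u₂ s) :
    ∀ t ∈ Set.Icc (0:ℝ) T, u₁ t = u₂ t := by
  set w : ℝ → ℝ := fun t => u₁ t - u₂ t with hw
  set w' : ℝ → ℝ := fun t => u₁' t - u₂' t with hw'
  set w'' : ℝ → ℝ := fun t => u₁'' t - u₂'' t with hw''
  have hwd1 : ∀ t ∈ Set.Icc (0:ℝ) T, HasDerivWithinAt w (w' t) (Set.Icc 0 T) t :=
    fun t ht => (h₁d1 t ht).sub (h₂d1 t ht)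
  have hwd2 : ∀ t ∈ Set.Icc (0:ℝ) T, HasDerivWithinAt w' (w'' t) (Set.Icc 0 T) t :=
    fun t ht => (h₁d2 t ht).sub (h₂d2 t ht)
  have hwc : ContinuousOn w'' (Set.Icc 0 T) := h₁c.sub h₂c
  have hz : ∀ t ∈ Set.Ioo (0:ℝ) T, w'' t = 0 := by
    intro t ht
    have h1 := h₁ode t ht
    have h2 := h₂ode t ht
    simp only [hw'']
    linarith
  -- w'' 0 = 0 by continuity
  have hz0 : w'' 0 = 0 := by
    have hne : (𝓝[Set.Ioo (0:ℝ) T] 0).NeBot := by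
      rw [← mem_closure_iff_nhdsWithin_neBot, closure_Ioo hT.ne]
      exact ⟨le_refl _, hT.le⟩
    have h1 : Tendsto w'' (𝓝[Set.Ioo (0:ℝ) T] 0) (𝓝 (w'' 0)) :=
      (hwc 0 ⟨le_refl _, hT.le⟩).mono Set.Ioo_subset_Icc_self
    have h2 : Tendsto w'' (𝓝[Set.Ioo (0:ℝ) T] 0) (𝓝 0) := by
      refine Tendsto.congr' ?_ tendsto_const_nhds
      filter_upwards [self_mem_nhdsWithin] with x hx
      exact (hz x hx).symm
    exact tendsto_nhds_unique h1 h2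
  have hzIco : ∀ x ∈ Set.Ico (0:ℝ) T, w'' x = 0 := by
    intro x hx
    rcases eq_or_lt_of_le hx.1 with h | h
    · rw [← h]; exact hz0
    · exact hz x ⟨h, hx.2⟩
  have hmem : ∀ x ∈ Set.Ico (0:ℝ) T, Set.Icc (0:ℝ) T ∈ 𝓝[Set.Ici x] x := by
    intro x hx
    have h1 : Set.Ici x ∩ Set.Iio T ∈ 𝓝[Set.Ici x] x :=
      inter_mem self_mem_nhdsWithin (mem_nhdsWithin_of_mem_nhds (Iio_mem_nhds hx.2))
    refine Filter.mem_of_superset h1 ?_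
    rintro t ⟨h1t, h2t⟩
    exact ⟨le_trans hx.1 h1t, le_of_lt h2t⟩
  -- w' is constant
  have hbconst : ∀ x ∈ Set.Icc (0:ℝ) T, w' x = w' 0 := by
    apply constant_of_has_deriv_right_zero
      (fun t ht => (hwd2 t ht).continuousWithinAt)
    intro x hx
    have h0 := (hwd2 x (Set.Ico_subset_Icc_self hx)).mono_of_mem_nhdsWithin (hmem x hx)
    rwa [hzIco x hx] at h0
  set b : ℝ := w' 0 with hb
  set a : ℝ := w 0 with ha
  -- w is affine
  have haff : ∀ x ∈ Set.Icc (0:ℝ) T, w x = a + b * x := by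
    have key : ∀ x ∈ Set.Icc (0:ℝ) T,
        (fun t => w t - b * t) x = (fun t => w t - b * t) 0 := by
      apply constant_of_has_deriv_right_zero
      · intro t ht
        have hbt : HasDerivWithinAt (fun t => b * t) b (Set.Icc 0 T) t := by
          simpa using (hasDerivWithinAt_id t (Set.Icc (0:ℝ) T)).const_mul b
        exact ((hwd1 t ht).sub hbt).continuousWithinAt
      · intro x hx
        have hbt : HasDerivWithinAt (fun t => b * t) b (Set.Icc 0 T) x := by
          simpa using (hasDerivWithinAt_id x (Set.Icc (0:ℝ) T)).const_mul b
        have h0 : HasDerivWithinAt (fun t => w t - b * t) (w' x - b)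
            (Set.Icc 0 T) x :=
          (hwd1 x (Set.Ico_subset_Icc_self hx)).sub hbt
        have h1 := h0.mono_of_mem_nhdsWithin (hmem x hx)
        rw [hbconst x (Set.Ico_subset_Icc_self hx)] at h1
        simpa using h1
    intro x hx
    have := key x hx
    simp only at this
    linarith
  -- boundary condition 1
  have hηmem : η ∈ Set.Icc (0:ℝ) T := ⟨hη0.le, hηT.le⟩
  have eq1 : a = β * (a + b * η) := by
    have h0 : w 0 = β * w η := by
      simp only [hw]
      rw [h₁bc1, h₂bc1]; ring
    rw [← haff η hηmem, ← h0]
  -- boundary condition 2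
  have hsub : Set.uIcc (0:ℝ) η ⊆ Set.Icc 0 T := by
    rw [Set.uIcc_of_le hη0.le]
    exact Set.Icc_subset_Icc le_rfl hηT.le
  have hint1 : IntervalIntegrable u₁ MeasureTheory.volume 0 η :=
    (ContinuousOn.intervalIntegrable
      (fun t ht => ((h₁d1 t (hsub ht)).continuousWithinAt).mono hsub))
  have hint2 : IntervalIntegrable u₂ MeasureTheory.volume 0 η :=
    (ContinuousOn.intervalIntegrable
      (fun t ht => ((h₂d1 t (hsub ht)).continuousWithinAt).mono hsub))
  have hintval : (∫ s in (0:ℝ)..η, u₁ s) - (∫ s in (0:ℝ)..η, u₂ s)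
      = a * η + b * (η ^ 2 / 2) := by
    rw [← intervalIntegral.integral_sub hint1 hint2]
    have hcong : ∫ s in (0:ℝ)..η, (u₁ s - u₂ s) = ∫ s in (0:ℝ)..η, (a + b * s) := by
      apply intervalIntegral.integral_congr
      intro s hs
      exact haff s (hsub hs)
    rw [hcong]
    have : ∫ s in (0:ℝ)..η, (a + b * s)
        = (∫ s in (0:ℝ)..η, a) + ∫ s in (0:ℝ)..η, b * s := by
      apply intervalIntegral.integral_add intervalIntegrable_const
      exact (continuous_const.mul continuous_id).intervalIntegrable 0 η
    rw [this, intervalIntegral.integral_const, intervalIntegral.integral_const_mul,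
      integral_id, smul_eq_mul]
    ring
  have eq2 : a + b * T = α * (a * η + b * (η ^ 2 / 2)) := by
    have hT0 : w T = α * ((∫ s in (0:ℝ)..η, u₁ s) - (∫ s in (0:ℝ)..η, u₂ s)) := by
      simp only [hw]
      rw [h₁bc2, h₂bc2]; ring
    rw [← haff T ⟨hT.le, le_rfl⟩, hT0, hintval]
  -- determinant nonzero
  have hdpos : 0 < α * η ^ 2 - 2 * η + 2 * T := by nlinarith
  have hDne : 2 * T - α * η ^ 2 - β * (α * η ^ 2 - 2 * η + 2 * T) ≠ 0 := by
    intro h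
    apply hβne
    rw [eq_div_iff hdpos.ne']
    linarith
  have ha0 : a = 0 := by
    have key : a * (2 * T - α * η ^ 2 - β * (α * η ^ 2 - 2 * η + 2 * T)) = 0 := by
      linear_combination (2 * T - α * η ^ 2) * eq1 + 2 * β * η * eq2
    exact (mul_eq_zero.1 key).resolve_right hDne
  have hb0 : b = 0 := by
    have key : b * (2 * T - α * η ^ 2 - β * (α * η ^ 2 - 2 * η + 2 * T)) = 0 := by
      linear_combination (2 * α * η - 2) * eq1 + (2 - 2 * β) * eq2
    exact (mul_eq_zero.1 key).resolve_right hDne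
  intro t ht
  have := haff t ht
  rw [ha0, hb0] at this
  simp only [hw] at this
  linarith
end

section
/- Let T > 0 and 0 < η < T, and suppose 0 < α < 2T/η² and 0 ≤ β < (2T − αη²)/(αη² − 2η + 2T). If y : [0,T] → [0,∞) is continuous and u is a twice continuously differentiable function on [0,T] satisfying u''(t) + y(t) = 0 on (0,T), u(0) = β u(η) and u(T) = α ∫₀^η u(s) ds, then u(t) ≥ 0 for all t ∈ [0,T]. -/
/- Lemma 2.2: if 0 < α < 2T/η² and 0 ≤ β < (2T−αη²)/(αη²−2η+2T) and y ≥ 0 is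
   continuous, then the solution u of the linear BVP is nonnegative on [0,T]. -/
set_option maxHeartbeats 2000000 in
theorem stmt_2 (T η α β : ℝ) (hT : 0 < T) (hη0 : 0 < η) (hηT : η < T)
    (hα : 0 < α) (hα2 : α < 2 * T / η ^ 2)
    (hβ : 0 ≤ β) (hβ2 : β < (2 * T - α * η ^ 2) / (α * η ^ 2 - 2 * η + 2 * T))
    (y : ℝ → ℝ) (hy : ContinuousOn y (Set.Icc 0 T))
    (hynn : ∀ t ∈ Set.Icc (0:ℝ) T, 0 ≤ y t)
    (u u' u'' : ℝ → ℝ)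
    (hd1 : ∀ t ∈ Set.Icc (0:ℝ) T, HasDerivWithinAt u (u' t) (Set.Icc 0 T) t)
    (hd2 : ∀ t ∈ Set.Icc (0:ℝ) T, HasDerivWithinAt u' (u'' t) (Set.Icc 0 T) t)
    (hc : ContinuousOn u'' (Set.Icc 0 T))
    (hode : ∀ t ∈ Set.Ioo (0:ℝ) T, u'' t + y t = 0)
    (hbc1 : u 0 = β * u η)
    (hbc2 : u T = α * ∫ s in (0:ℝ)..η, u s) :
    ∀ t ∈ Set.Icc (0:ℝ) T, 0 ≤ u t := by
  have hint : interior (Set.Icc (0:ℝ) T) = Set.Ioo 0 T := interior_Icc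
  have hIooIcc : Set.Ioo (0:ℝ) T ⊆ Set.Icc 0 T := Set.Ioo_subset_Icc_self
  have hucont : ContinuousOn u (Set.Icc 0 T) :=
    fun t ht => (hd1 t ht).continuousWithinAt
  -- concavity
  have hconc : ConcaveOn ℝ (Set.Icc 0 T) u := by
    apply concaveOn_of_hasDerivWithinAt2_nonpos (convex_Icc 0 T) hucont
      (f' := u') (f'' := u'')
    · intro x hx; rw [hint] at hx ⊢
      exact (hd1 x (hIooIcc hx)).mono hIooIcc
    · intro x hx; rw [hint] at hx ⊢
      exact (hd2 x (hIooIcc hx)).mono hIooIcc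
    · intro x hx; rw [hint] at hx
      have h1 := hode x hx
      have h2 := hynn x (hIooIcc hx)
      linarith
  set a := u 0 with ha
  set b := u T with hb
  clear_value a b
  -- chord inequality
  have hchord : ∀ t ∈ Set.Icc (0:ℝ) T, a + (b - a) * t / T ≤ u t := by
    intro t ht
    obtain ⟨ht0, htT⟩ := ht
    have h1 : (0:ℝ) ≤ (T - t) / T := div_nonneg (by linarith) hT.le
    have h2 : (0:ℝ) ≤ t / T := div_nonneg ht0 hT.le
    have h3 : (T - t) / T + t / T = 1 := by field_simp; ring
    have hcc := hconc.2 (Set.left_mem_Icc.2 hT.le) (Set.right_mem_Icc.2 hT.le) h1 h2 h3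
    simp only [smul_eq_mul] at hcc
    rw [← ha, ← hb] at hcc
    have heq : (T - t) / T * 0 + t / T * T = t := by field_simp; ring
    rw [heq] at hcc
    have hexp : a + (b - a) * t / T = (T - t) / T * a + t / T * b := by
      field_simp; ring
    linarith [hcc, hexp]
  -- integral inequality
  have hηmem : η ∈ Set.Icc (0:ℝ) T := ⟨hη0.le, hηT.le⟩
  have hsub : Set.Icc (0:ℝ) η ⊆ Set.Icc 0 T := Set.Icc_subset_Icc le_rfl hηT.le
  have hU : Set.uIcc (0:ℝ) η = Set.Icc 0 η := Set.uIcc_of_le hη0.le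
  have hintu : IntervalIntegrable u MeasureTheory.volume 0 η :=
    ContinuousOn.intervalIntegrable (by rw [hU]; exact hucont.mono hsub)
  have hcl : Continuous fun s : ℝ => a + (b - a) * s / T := by continuity
  have hintl : IntervalIntegrable (fun s => a + (b - a) * s / T) MeasureTheory.volume 0 η :=
    hcl.intervalIntegrable 0 η
  have hmono : (∫ s in (0:ℝ)..η, (a + (b - a) * s / T)) ≤ ∫ s in (0:ℝ)..η, u s := by
    apply intervalIntegral.integral_mono_on hη0.le hintl hintu
    intro s hs
    exact hchord s (hsub hs)
  have hval : (∫ s in (0:ℝ)..η, (a + (b - a) * s / T)) = a * η + (b - a) / T * (η ^ 2 / 2) := by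
    have hrw : (∫ s in (0:ℝ)..η, (a + (b - a) * s / T))
        = ∫ s in (0:ℝ)..η, (a + ((b - a) / T) * s) := by
      apply intervalIntegral.integral_congr
      intro s _; ring
    rw [hrw, intervalIntegral.integral_add intervalIntegrable_const
        ((by continuity : Continuous fun s : ℝ => (b - a) / T * s).intervalIntegrable 0 η),
      intervalIntegral.integral_const, intervalIntegral.integral_const_mul]
    have : (∫ s in (0:ℝ)..η, s) = (η ^ 2 - 0 ^ 2) / 2 := integral_id
    rw [this]
    rw [smul_eq_mul]
    ring
  -- key algebraic facts
  have hαη2 : α * η ^ 2 < 2 * T := by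
    have hη2 : (0:ℝ) < η ^ 2 := by positivity
    rw [lt_div_iff₀ hη2] at hα2; linarith
  have hden : 0 < α * η ^ 2 - 2 * η + 2 * T := by
    have := mul_pos hα (pow_pos hη0 2); linarith
  have hβ2' : β * (α * η ^ 2 - 2 * η + 2 * T) < 2 * T - α * η ^ 2 := by
    rw [lt_div_iff₀ hden] at hβ2; linarith
  have h1 : α * (a * η + (b - a) / T * (η ^ 2 / 2)) ≤ b := by
    calc α * (a * η + (b - a) / T * (η ^ 2 / 2))
        = α * ∫ s in (0:ℝ)..η, (a + (b - a) * s / T) := by rw [hval]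
      _ ≤ α * ∫ s in (0:ℝ)..η, u s := mul_le_mul_of_nonneg_left hmono hα.le
      _ = b := hbc2.symm
  have h2 : β * (a + (b - a) * η / T) ≤ a :=
    calc β * (a + (b - a) * η / T) ≤ β * u η :=
          mul_le_mul_of_nonneg_left (hchord η hηmem) hβ
      _ = a := hbc1.symm
  -- expanded forms
  have h1e : α * η * (2 * T - η) * a + α * η ^ 2 * b ≤ 2 * T * b := by
    have key1 := mul_le_mul_of_nonneg_left h1 (by linarith : (0:ℝ) ≤ 2 * T)
    have hexp1 : 2 * T * (α * (a * η + (b - a) / T * (η ^ 2 / 2)))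
        = α * η * (2 * T - η) * a + α * η ^ 2 * b := by
      field_simp; ring
    linarith [key1, hexp1]
  have h2e : β * (T - η) * a + β * η * b ≤ T * a := by
    have key2 := mul_le_mul_of_nonneg_left h2 hT.le
    have hexp2 : T * (β * (a + (b - a) * η / T)) = β * (T - η) * a + β * η * b := by
      field_simp; ring
    linarith [key2, hexp2]
  -- derive a ≥ 0
  have hcoefpos : 0 < T * ((2 * T - α * η ^ 2) - β * (α * η ^ 2 - 2 * η + 2 * T)) := by
    apply mul_pos hT; linarith
  have k1 := mul_le_mul_of_nonneg_left h1e (mul_nonneg hβ hη0.le)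
  have k2 := mul_le_mul_of_nonneg_left h2e (by linarith : (0:ℝ) ≤ 2 * T - α * η ^ 2)
  have key : 0 ≤ (T * ((2 * T - α * η ^ 2) - β * (α * η ^ 2 - 2 * η + 2 * T))) * a := by
    nlinarith [k1, k2]
  have ha0 : 0 ≤ a := by
    by_contra h
    push_neg at h
    have := mul_neg_of_pos_of_neg hcoefpos h
    linarith
  have hb0 : 0 ≤ b := by
    have hnn : 0 ≤ α * η * (2 * T - η) * a :=
      mul_nonneg (mul_nonneg (mul_nonneg hα.le hη0.le) (by linarith)) ha0
    by_contra h
    push_neg at h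
    have := mul_neg_of_pos_of_neg (by linarith : (0:ℝ) < 2 * T - α * η ^ 2) h
    nlinarith [h1e, hnn]
  -- conclude
  intro t ht
  obtain ⟨ht0, htT⟩ := ht
  have hch := hchord t ⟨ht0, htT⟩
  have hnn : 0 ≤ a + (b - a) * t / T := by
    have hexp : a + (b - a) * t / T = ((T - t) * a + t * b) / T := by field_simp; ring
    rw [hexp]
    apply div_nonneg _ hT.le
    have : 0 ≤ (T - t) * a := mul_nonneg (by linarith) ha0
    have : 0 ≤ t * b := mul_nonneg ht0 hb0
    nlinarith [mul_nonneg (by linarith : (0:ℝ) ≤ T - t) ha0, mul_nonneg ht0 hb0]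
  linarith
end

section
/- Let T > 0, 0 < η < T, β ≥ 0, and α > 2T/η². If y : [0,T] → [0,∞) is continuous, then there is no twice continuously differentiable function u on [0,T] satisfying u''(t) + y(t) = 0 on (0,T), u(0) = β u(η), u(T) = α ∫₀^η u(s) ds, u(t) ≥ 0 for all t ∈ [0,T], and u(t) > 0 for some t ∈ [0,T]. -/
open Set intervalIntegral

/-- Chord inequality for concave functions on `[0,T]`. -/
lemma chord_le {T : ℝ} {u : ℝ → ℝ} (hc : ConcaveOn ℝ (Set.Icc 0 T) u)
    {p q s : ℝ} (hp : p ∈ Set.Icc 0 T) (hq : q ∈ Set.Icc 0 T)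
    (hps : p ≤ s) (hsq : s ≤ q) (hpq : p < q) :
    ((q - s) / (q - p)) * u p + ((s - p) / (q - p)) * u q ≤ u s := by
  have hqp : 0 < q - p := by linarith
  have ha : 0 ≤ (q - s) / (q - p) := div_nonneg (by linarith) hqp.le
  have hb : 0 ≤ (s - p) / (q - p) := div_nonneg (by linarith) hqp.le
  have hab : (q - s) / (q - p) + (s - p) / (q - p) = 1 := by
    field_simp
    ring
  have := hc.2 hp hq ha hb hab
  have hxy : ((q - s) / (q - p)) • p + ((s - p) / (q - p)) • q = s := by
    rw [smul_eq_mul, smul_eq_mul]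
    field_simp
    ring
  rw [hxy] at this
  simpa [smul_eq_mul] using this

/- Lemma 2.3: if α > 2T/η² and β ≥ 0, the linear BVP has no positive solution. -/
theorem stmt_3 (T η α β : ℝ) (hT : 0 < T) (hη0 : 0 < η) (hηT : η < T)
    (hα : 2 * T / η ^ 2 < α) (hβ : 0 ≤ β)
    (y : ℝ → ℝ) (hy : ContinuousOn y (Set.Icc 0 T))
    (hynn : ∀ t ∈ Set.Icc (0:ℝ) T, 0 ≤ y t) :
    ¬ ∃ u u' u'' : ℝ → ℝ,
      (∀ t ∈ Set.Icc (0:ℝ) T, HasDerivWithinAt u (u' t) (Set.Icc 0 T) t) ∧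
      (∀ t ∈ Set.Icc (0:ℝ) T, HasDerivWithinAt u' (u'' t) (Set.Icc 0 T) t) ∧
      ContinuousOn u'' (Set.Icc 0 T) ∧
      (∀ t ∈ Set.Ioo (0:ℝ) T, u'' t + y t = 0) ∧
      u 0 = β * u η ∧
      u T = α * (∫ s in (0:ℝ)..η, u s) ∧
      (∀ t ∈ Set.Icc (0:ℝ) T, 0 ≤ u t) ∧
      (∃ t ∈ Set.Icc (0:ℝ) T, 0 < u t) := by
  rintro ⟨u, u', u'', hu', hu'', _hu''c, hode, _hbc0, hbcT, hnn, t0, ht0, ht0pos⟩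
  have hint : interior (Set.Icc (0:ℝ) T) = Set.Ioo 0 T := interior_Icc
  have hucont : ContinuousOn u (Set.Icc 0 T) :=
    fun t ht => (hu' t ht).continuousWithinAt
  -- concavity
  have hconc : ConcaveOn ℝ (Set.Icc 0 T) u := by
    apply concaveOn_of_hasDerivWithinAt2_nonpos (f' := u') (f'' := u'')
      (convex_Icc 0 T) hucont
    · intro x hx
      rw [hint] at hx ⊢
      exact (hu' x (Set.Ioo_subset_Icc_self hx)).mono Set.Ioo_subset_Icc_self
    · intro x hx
      rw [hint] at hx ⊢
      exact (hu'' x (Set.Ioo_subset_Icc_self hx)).mono Set.Ioo_subset_Icc_self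
    · intro x hx
      rw [hint] at hx
      have := hode x hx
      have := hynn x (Set.Ioo_subset_Icc_self hx)
      linarith
  have hαpos : 0 < α := lt_trans (by positivity) hα
  have hu0 : 0 ≤ u 0 := hnn 0 ⟨le_refl _, hT.le⟩
  have huT : 0 ≤ u T := hnn T ⟨hT.le, le_refl _⟩
  have hTmem : T ∈ Set.Icc (0:ℝ) T := ⟨hT.le, le_refl _⟩
  have h0mem : (0:ℝ) ∈ Set.Icc (0:ℝ) T := ⟨le_refl _, hT.le⟩
  have huint : IntervalIntegrable u MeasureTheory.volume 0 η := by
    apply ContinuousOn.intervalIntegrable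
    apply hucont.mono
    rw [Set.uIcc_of_le hη0.le]
    exact Set.Icc_subset_Icc (le_refl _) (by linarith)
  -- first: u T = 0
  have huT0 : u T = 0 := by
    by_contra h
    have huTpos : 0 < u T := lt_of_le_of_ne huT (Ne.symm h)
    -- lower bound for u on [0, η]
    have hlow : ∀ s ∈ Set.Icc (0:ℝ) η, u T / T * s ≤ u s := by
      intro s hs
      have hsI : s ∈ Set.Icc (0:ℝ) T := ⟨hs.1, by linarith [hs.2]⟩
      have := chord_le hconc h0mem hTmem hs.1 hsI.2 hT
      have h1 : 0 ≤ (T - s) / (T - 0) * u 0 := by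
        have : 0 ≤ (T - s) / (T - 0) := by
          apply div_nonneg <;> linarith [hsI.2]
        positivity
      have h2 : (s - 0) / (T - 0) * u T = u T / T * s := by ring
      linarith [this, h1, h2.symm.le]
    have hintlow : (∫ s in (0:ℝ)..η, u T / T * s) ≤ ∫ s in (0:ℝ)..η, u s := by
      apply intervalIntegral.integral_mono_on hη0.le _ huint
      · exact fun s hs => hlow s hs
      · exact (continuous_const.mul continuous_id).intervalIntegrable 0 η
    have hval : (∫ s in (0:ℝ)..η, u T / T * s) = u T / T * (η ^ 2 / 2) := by
      rw [intervalIntegral.integral_const_mul, integral_id]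
      ring
    rw [hval] at hintlow
    have hα' : 2 * T < α * η ^ 2 := by
      rw [div_lt_iff₀ (by positivity)] at hα
      linarith
    have hI : u T = α * ∫ s in (0:ℝ)..η, u s := hbcT
    have h1 : u T * η ^ 2 ≤ (∫ s in (0:ℝ)..η, u s) * (2 * T) := by
      rw [div_mul_eq_mul_div, div_le_iff₀ hT] at hintlow
      nlinarith
    nlinarith [mul_le_mul_of_nonneg_left h1 hαpos.le,
      mul_lt_mul_of_pos_right hα' huTpos, mul_pos hT huTpos]
  -- hence the integral is zero
  have hIzero : (∫ s in (0:ℝ)..η, u s) = 0 := by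
    have := hbcT
    rw [huT0] at this
    replace this := mul_eq_zero.mp this.symm
    rcases this with h | h
    · exact absurd h hαpos.ne'
    · exact h
  -- but u is positive on (0, T)
  have ht0T : t0 ≠ T := fun h => by rw [h, huT0] at ht0pos; exact lt_irrefl 0 ht0pos
  have ht0ltT : t0 < T := lt_of_le_of_ne ht0.2 ht0T
  have hpos : ∀ s ∈ Set.Ioo (0:ℝ) T, 0 < u s := by
    intro s hs
    rcases lt_trichotomy s t0 with hlt | heq | hgt
    · -- s < t0 : chord from 0 to t0
      have ht00 : 0 < t0 := lt_trans hs.1 hlt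
      have := chord_le hconc h0mem ht0 hs.1.le hlt.le ht00
      have h1 : 0 ≤ (t0 - s) / (t0 - 0) * u 0 := by
        have : 0 ≤ (t0 - s) / (t0 - 0) := by
          apply div_nonneg <;> linarith
        positivity
      have h2 : 0 < (s - 0) / (t0 - 0) * u t0 := by
        apply mul_pos _ ht0pos
        apply div_pos <;> linarith [hs.1]
      linarith
    · rw [heq]; exact ht0pos
    · -- t0 < s : chord from t0 to T
      have := chord_le hconc ht0 hTmem hgt.le hs.2.le (lt_trans hgt hs.2)
      have h1 : 0 < (T - s) / (T - t0) * u t0 := by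
        apply mul_pos _ ht0pos
        apply div_pos <;> linarith [hs.2]
      have h2 : (s - t0) / (T - t0) * u T = 0 := by rw [huT0]; ring
      linarith
  have : 0 < ∫ s in (0:ℝ)..η, u s := by
    apply intervalIntegral.intervalIntegral_pos_of_pos_on huint _ hη0
    intro x hx
    exact hpos x ⟨hx.1, lt_trans hx.2 hηT⟩
  rw [hIzero] at this
  exact lt_irrefl 0 this
end

section
/- Let T > 0 and 0 < η < T, and suppose 0 < α < 2T/η² and 0 ≤ β < (2T − αη²)/(αη² − 2η + 2T). Set γ = min{ η/T, α(β+1)η²/(2T), α(β+1)η(T−η)/(2T − α(β+1)η²) }. If y : [0,T] → [0,∞) is continuous and u is a twice continuously differentiable function on [0,T] satisfying u''(t) + y(t) = 0 on (0,T), u(0) = β u(η) and u(T) = α ∫₀^η u(s) ds, then min_{t ∈ [η,T]} u(t) ≥ γ · max_{t ∈ [0,T]} |u(t)|. -/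
/- Lemma 2.4: the solution u of the linear BVP satisfies
   min_{t ∈ [η,T]} u(t) ≥ γ ‖u‖ with the explicit constant γ. -/


private lemma chord_aux {u : ℝ → ℝ} {s : Set ℝ} (h : ConcaveOn ℝ s u) {a b x : ℝ}
    (ha : a ∈ s) (hb : b ∈ s) (hab : a < b) (hx1 : a ≤ x) (hx2 : x ≤ b) :
    (b - x) * u a + (x - a) * u b ≤ (b - a) * u x := by
  have hba : (0:ℝ) < b - a := by linarith
  have h1 : 0 ≤ (b - x)/(b-a) := div_nonneg (by linarith) hba.le
  have h2 : 0 ≤ (x - a)/(b-a) := div_nonneg (by linarith) hba.le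
  have h3 : (b-x)/(b-a) + (x-a)/(b-a) = 1 := by field_simp; ring
  have h4 := h.2 ha hb h1 h2 h3
  rw [smul_eq_mul, smul_eq_mul, smul_eq_mul, smul_eq_mul] at h4
  have hxe : (b-x)/(b-a) * a + (x-a)/(b-a) * b = x := by field_simp; ring
  rw [hxe] at h4
  have h5 := mul_le_mul_of_nonneg_left h4 hba.le
  calc (b-x)*u a + (x-a)*u b = (b-a) * ((b-x)/(b-a)*u a + (x-a)/(b-a)*u b) := by
        field_simp
  _ ≤ (b-a) * u x := h5

private lemma int_lin (a b c : ℝ) :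
    (∫ t in (0:ℝ)..c, (a + t*b)) = a*c + b*c^2/2 := by
  have h1 : IntervalIntegrable (fun _ : ℝ => a) MeasureTheory.volume 0 c :=
    intervalIntegrable_const
  have h2 : IntervalIntegrable (fun t : ℝ => t*b) MeasureTheory.volume 0 c :=
    (continuous_id.mul continuous_const).intervalIntegrable _ _
  rw [intervalIntegral.integral_add h1 h2, intervalIntegral.integral_const,
    intervalIntegral.integral_mul_const, integral_id]
  simp; ring

set_option maxHeartbeats 2000000 in
theorem stmt_4 (T η α β γ : ℝ) (hT : 0 < T) (hη0 : 0 < η) (hηT : η < T)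
    (hα : 0 < α) (hα2 : α < 2 * T / η ^ 2)
    (hβ : 0 ≤ β) (hβ2 : β < (2 * T - α * η ^ 2) / (α * η ^ 2 - 2 * η + 2 * T))
    (hγ : γ = min (η / T) (min (α * (β + 1) * η ^ 2 / (2 * T))
      (α * (β + 1) * η * (T - η) / (2 * T - α * (β + 1) * η ^ 2))))
    (y : ℝ → ℝ) (hy : ContinuousOn y (Set.Icc 0 T))
    (hynn : ∀ t ∈ Set.Icc (0:ℝ) T, 0 ≤ y t)
    (u u' u'' : ℝ → ℝ)
    (hd1 : ∀ t ∈ Set.Icc (0:ℝ) T, HasDerivWithinAt u (u' t) (Set.Icc 0 T) t)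
    (hd2 : ∀ t ∈ Set.Icc (0:ℝ) T, HasDerivWithinAt u' (u'' t) (Set.Icc 0 T) t)
    (hc : ContinuousOn u'' (Set.Icc 0 T))
    (hode : ∀ t ∈ Set.Ioo (0:ℝ) T, u'' t + y t = 0)
    (hbc1 : u 0 = β * u η)
    (hbc2 : u T = α * ∫ s in (0:ℝ)..η, u s) :
    ∀ t ∈ Set.Icc η T, γ * sSup ((fun s => |u s|) '' Set.Icc (0:ℝ) T) ≤ u t := by
  have hmem0 : (0:ℝ) ∈ Set.Icc (0:ℝ) T := ⟨le_refl 0, hT.le⟩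
  have hmemT : T ∈ Set.Icc (0:ℝ) T := ⟨hT.le, le_refl T⟩
  have hmemη : η ∈ Set.Icc (0:ℝ) T := ⟨hη0.le, hηT.le⟩
  have hcu : ContinuousOn u (Set.Icc 0 T) := fun x hx => (hd1 x hx).continuousWithinAt
  have hsubIoo : Set.Ioo (0:ℝ) T ⊆ Set.Icc 0 T := Set.Ioo_subset_Icc_self
  -- concavity
  have hconc : ConcaveOn ℝ (Set.Icc (0:ℝ) T) u := by
    apply concaveOn_of_hasDerivWithinAt2_nonpos (convex_Icc 0 T) hcu
      (f' := u') (f'' := u'')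
    · intro x hx; rw [interior_Icc] at hx ⊢
      exact (hd1 x (hsubIoo hx)).mono hsubIoo
    · intro x hx; rw [interior_Icc] at hx ⊢
      exact (hd2 x (hsubIoo hx)).mono hsubIoo
    · intro x hx; rw [interior_Icc] at hx
      have h1 := hode x hx; have h2 := hynn x (hsubIoo hx); linarith
  -- basic inequalities on constants
  have hq : 0 < α * η ^ 2 - 2 * η + 2 * T := by
    nlinarith [mul_pos hα (pow_pos hη0 2)]
  have hβq : β * (α * η ^ 2 - 2 * η + 2 * T) < 2 * T - α * η ^ 2 :=
    (lt_div_iff₀ hq).mp hβ2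
  have key2 : (β + 1) * (α * η ^ 2 - 2 * η + 2 * T) < 4 * T - 2 * η := by nlinarith
  have hαη2 : α * η ^ 2 < 2 * T := by
    have := (lt_div_iff₀ (pow_pos hη0 2)).mp hα2; linarith
  have hD1 : 0 < 2 * T - α * (β + 1) * η ^ 2 := by
    nlinarith [key2, mul_nonneg hβ (by linarith : (0:ℝ) ≤ 2 * T - 2 * η)]
  -- integral bounds
  set I := ∫ s in (0:ℝ)..η, u s with hIdef
  have hsub0η : Set.Icc (0:ℝ) η ⊆ Set.Icc 0 T := Set.Icc_subset_Icc le_rfl hηT.le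
  have hintu : IntervalIntegrable u MeasureTheory.volume 0 η :=
    (hcu.mono (by rw [Set.uIcc_of_le hη0.le]; exact hsub0η)).intervalIntegrable
  have hle1 : ∀ t ∈ Set.Icc (0:ℝ) η, η * u 0 + t * (u η - u 0) ≤ η * u t := by
    intro t ht
    have := chord_aux hconc hmem0 hmemη hη0 ht.1 ht.2
    linarith
  have hle2 : ∀ t ∈ Set.Icc (0:ℝ) η,
      (T - η) * u t ≤ (T * u η - η * u T) + t * (u T - u η) := by
    intro t ht
    have := chord_aux hconc (hsub0η ht) hmemT (lt_of_le_of_lt ht.2 hηT) ht.2 hηT.le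
    linarith
  have hlin1 : IntervalIntegrable (fun t : ℝ => η * u 0 + t * (u η - u 0))
      MeasureTheory.volume 0 η :=
    (Continuous.intervalIntegrable (continuous_const.add (continuous_id.mul continuous_const)) _ _)
  have hlin2 : IntervalIntegrable (fun t : ℝ => (T * u η - η * u T) + t * (u T - u η))
      MeasureTheory.volume 0 η :=
    (Continuous.intervalIntegrable (continuous_const.add (continuous_id.mul continuous_const)) _ _)
  have key_low : η * u 0 * η + (u η - u 0) * η ^ 2 / 2 ≤ η * I := by
    have mono1 := intervalIntegral.integral_mono_on hη0.le hlin1 (hintu.const_mul η) hle1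
    rwa [int_lin, intervalIntegral.integral_const_mul] at mono1
  have key_high : (T - η) * I ≤ (T * u η - η * u T) * η + (u T - u η) * η ^ 2 / 2 := by
    have mono2 := intervalIntegral.integral_mono_on hη0.le (hintu.const_mul (T - η)) hlin2 hle2
    rwa [int_lin, intervalIntegral.integral_const_mul] at mono2
  -- E1' : α η (β+1) u(η) ≤ 2 u(T)
  have E1 : α * η ^ 2 * ((β + 1) * u η) ≤ 2 * η * u T := by
    have h := mul_le_mul_of_nonneg_left key_low (by positivity : (0:ℝ) ≤ 2 * α)
    have hTeq2 : 2 * η * u T = 2 * α * (η * I) := by rw [hbc2]; ring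
    calc α * η ^ 2 * ((β + 1) * u η)
        = 2 * α * (η * u 0 * η + (u η - u 0) * η ^ 2 / 2) := by rw [hbc1]; ring
      _ ≤ 2 * α * (η * I) := h
      _ = 2 * η * u T := hTeq2.symm
  have E1' : α * η * ((β + 1) * u η) ≤ 2 * u T := by
    refine le_of_mul_le_mul_left ?_ hη0
    calc η * (α * η * ((β + 1) * u η)) = α * η ^ 2 * ((β + 1) * u η) := by ring
      _ ≤ 2 * η * u T := E1
      _ = η * (2 * u T) := by ring
  -- E0' : (2T - 2η + αη²) u(T) ≤ αη(2T - η) u(η)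
  have E0' : (2 * T - 2 * η + α * η ^ 2) * u T ≤ α * η * (2 * T - η) * u η := by
    have h := mul_le_mul_of_nonneg_left key_high hα.le
    have hTeq : (T - η) * u T = α * ((T - η) * I) := by rw [hbc2]; ring
    have h3 : (T - η) * u T ≤ α * ((T * u η - η * u T) * η + (u T - u η) * η ^ 2 / 2) := by
      rw [hTeq]; exact h
    nlinarith [h3]
  -- nonnegativity of u T
  have huT : 0 ≤ u T := by
    by_contra hcon; push_neg at hcon
    have huη : u η < 0 := by
      by_contra h'; push_neg at h'
      have h0 : 0 ≤ α * η * ((β + 1) * u η) := by positivity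
      linarith
    have s1 : α * η * ((β + 1) * u η) * (α * η ^ 2 - 2 * η + 2 * T) ≤
        2 * u T * (α * η ^ 2 - 2 * η + 2 * T) :=
      mul_le_mul_of_nonneg_right E1' hq.le
    have s3 : (4 * T - 2 * η) * u η < (β + 1) * (α * η ^ 2 - 2 * η + 2 * T) * u η :=
      mul_lt_mul_of_neg_right key2 huη
    have s4 := mul_lt_mul_of_pos_left s3 (show (0:ℝ) < α * η by positivity)
    nlinarith [s1, s4, E0']
  -- nonnegativity of u 0
  have hu0 : 0 ≤ u 0 := by
    by_contra h0; push_neg at h0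
    have huη : u η < 0 := by
      by_contra h'; push_neg at h'
      have : 0 ≤ β * u η := mul_nonneg hβ h'
      linarith [hbc1 ▸ this]
    have c1 := chord_aux hconc hmem0 hmemT hT hη0.le hηT.le
    -- (T-η) u 0 + η u T ≤ T u η
    have h4 : (T - η) * (β * u η) ≤ T * u η := by
      have : 0 ≤ η * u T := mul_nonneg hη0.le huT
      rw [← hbc1]; linarith
    have h5 : T ≤ β * (T - η) := by
      by_contra h5'; push_neg at h5'
      have := mul_lt_mul_of_neg_right h5' huη
      nlinarith
    have h6a := mul_le_mul_of_nonneg_right h5 hq.le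
    have h6b := mul_lt_mul_of_pos_right hβq (show (0:ℝ) < T - η by linarith)
    have h7 : 0 < α * η ^ 2 * (2 * T - η) :=
      mul_pos (mul_pos hα (pow_pos hη0 2)) (by linarith)
    linarith [h6a, h6b, h7]
  -- nonnegativity of u everywhere
  have hunn : ∀ s ∈ Set.Icc (0:ℝ) T, 0 ≤ u s := by
    intro s hs
    have c := chord_aux hconc hmem0 hmemT hT hs.1 hs.2
    nlinarith [mul_nonneg (by linarith [hs.2] : (0:ℝ) ≤ T - s) hu0,
      mul_nonneg hs.1 huT]
  -- the maximum
  obtain ⟨σ, hσK, hσmax⟩ := isCompact_Icc.exists_isMaxOn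
    (Set.nonempty_Icc.mpr hT.le) hcu
  have hσle := isMaxOn_iff.mp hσmax
  set M := u σ with hMdef
  have hM : sSup ((fun s => |u s|) '' Set.Icc (0:ℝ) T) = M := by
    have himg : (fun s => |u s|) '' Set.Icc (0:ℝ) T = u '' Set.Icc (0:ℝ) T :=
      Set.image_congr fun x hx => abs_of_nonneg (hunn x hx)
    rw [himg]
    exact IsGreatest.csSup_eq ⟨Set.mem_image_of_mem u hσK, by
      rintro _ ⟨x, hx, rfl⟩; exact hσle x hx⟩
  have hMnn : 0 ≤ M := hunn σ hσK
  have huηnn : 0 ≤ u η := hunn η hmemη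
  -- γ bounds
  have hγ1 : γ ≤ η / T := by rw [hγ]; exact min_le_left _ _
  have hγ2 : γ ≤ α * (β + 1) * η ^ 2 / (2 * T) := by
    rw [hγ]; exact le_trans (min_le_right _ _) (min_le_left _ _)
  have hγ3 : γ ≤ α * (β + 1) * η * (T - η) / (2 * T - α * (β + 1) * η ^ 2) := by
    rw [hγ]; exact le_trans (min_le_right _ _) (min_le_right _ _)
  -- the two key bounds
  have hkey : γ * M ≤ u η ∧ γ * M ≤ u T := by
    rcases le_or_gt η σ with hσc | hσc
    · -- max to the right of η
      have hσ0 : 0 < σ := lt_of_lt_of_le hη0 hσc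
      have c1 := chord_aux hconc hmem0 hσK hσ0 hη0.le hσc
      -- (σ-η) u 0 + (η-0) u σ ≤ (σ-0) u η
      have hline : η * M ≤ T * u η := by
        nlinarith [mul_nonneg (by linarith : (0:ℝ) ≤ σ - η) hu0,
          mul_nonneg (by linarith [hσK.2] : (0:ℝ) ≤ T - σ) huηnn]
      constructor
      · have g1 : γ * M ≤ η / T * M := mul_le_mul_of_nonneg_right hγ1 hMnn
        have g2 : η / T * M ≤ u η := by
          rw [div_mul_eq_mul_div, div_le_iff₀ hT]; linarith
        linarith
      · have g1 : γ * M ≤ α * (β + 1) * η ^ 2 / (2 * T) * M :=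
          mul_le_mul_of_nonneg_right hγ2 hMnn
        have g2 : α * (β + 1) * η ^ 2 / (2 * T) * M ≤ u T := by
          rw [div_mul_eq_mul_div, div_le_iff₀ (by linarith : (0:ℝ) < 2 * T)]
          nlinarith [mul_le_mul_of_nonneg_right E1' hT.le,
            mul_le_mul_of_nonneg_left hline (show (0:ℝ) ≤ α * η * (β + 1) by positivity)]
        linarith
    · -- max to the left of η
      have c2 := chord_aux hconc hσK hmemT (lt_trans hσc hηT) hσc.le hηT.le
      -- (T-η) u σ + (η-σ) u T ≤ (T-σ) u η
      have huTM : u T ≤ M := hσle T hmemT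
      have hTη : u T ≤ u η := by
        by_contra hcon; push_neg at hcon
        nlinarith [mul_nonneg (by linarith : (0:ℝ) ≤ T - η) (by linarith : (0:ℝ) ≤ M - u T),
          mul_lt_mul_of_pos_left hcon (show (0:ℝ) < T - σ by linarith)]
      have key : (T - η) * M ≤ T * u η - η * u T := by
        nlinarith [mul_nonneg hσK.1 (by linarith : (0:ℝ) ≤ u η - u T)]
      have h2 : γ * M ≤ u T := by
        have g1 : γ * M ≤ α * (β + 1) * η * (T - η) / (2 * T - α * (β + 1) * η ^ 2) * M :=
          mul_le_mul_of_nonneg_right hγ3 hMnn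
        have g2 : α * (β + 1) * η * (T - η) / (2 * T - α * (β + 1) * η ^ 2) * M ≤ u T := by
          rw [div_mul_eq_mul_div, div_le_iff₀ hD1]
          nlinarith [mul_le_mul_of_nonneg_left key (show (0:ℝ) ≤ α * η * (β + 1) by positivity),
            mul_le_mul_of_nonneg_right E1' hT.le]
        linarith
      exact ⟨le_trans h2 hTη, h2⟩
  -- conclusion
  intro t ht
  rw [hM]
  have c3 := chord_aux hconc hmemη hmemT hηT ht.1 ht.2
  have w1 := mul_le_mul_of_nonneg_left hkey.1 (by linarith [ht.2] : (0:ℝ) ≤ T - t)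
  have w2 := mul_le_mul_of_nonneg_left hkey.2 (by linarith [ht.1] : (0:ℝ) ≤ t - η)
  have hfin : (T - η) * (γ * M) ≤ (T - η) * u t := by linarith
  exact le_of_mul_le_mul_left hfin (by linarith)
end

section
/- Let T > 0, 0 < η < T, 0 < α < 2T/η², 0 ≤ β < (2T − αη²)/(αη² − 2η + 2T), and set D = (αη² − 2T) − β(2η − αη² − 2T) and γ = min{ η/T, α(β+1)η²/(2T), α(β+1)η(T−η)/(2T − α(β+1)η²) }. Let f : [0,∞) → [0,∞) and a : [0,T] → [0,∞) be continuous. Define for each continuous u : [0,T] → [0,∞) the function (Au)(t) = ((β(2T − αη²) − 2β(1 − αη)t)/D) ∫₀^η (η − s) a(s) f(u(s)) ds + ((αβη − α(β − 1)t)/D) ∫₀^η (η − s)² a(s) f(u(s)) ds + ((2(β − 1)t − 2βη)/D) ∫₀^T (T − s) a(s) f(u(s)) ds − ∫₀^t (t − s) a(s) f(u(s)) ds. Then for every continuous u : [0,T] → [0,∞) with min_{t ∈ [η,T]} u(t) ≥ γ ‖u‖, the function Au satisfies Au(t) ≥ 0 for all t ∈ [0,T] and min_{t ∈ [η,T]}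 (Au)(t) ≥ γ ‖Au‖, where ‖v‖ = max_{t ∈ [0,T]} |v(t)|. -/
open Set intervalIntegral MeasureTheory

private lemma chord_aux_s9 {v : ℝ → ℝ} (hc : ConcaveOn ℝ Set.univ v) {x y t : ℝ}
    (hxy : x < y) (hxt : x ≤ t) (hty : t ≤ y) :
    ((y - t) / (y - x)) * v x + ((t - x) / (y - x)) * v y ≤ v t := by
  have h0 : (0:ℝ) < y - x := by linarith
  have ha : (0:ℝ) ≤ (y - t) / (y - x) := div_nonneg (by linarith) h0.le
  have hb : (0:ℝ) ≤ (t - x) / (y - x) := div_nonneg (by linarith) h0.le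
  have hab : (y - t) / (y - x) + (t - x) / (y - x) = 1 := by field_simp; ring
  have h := hc.2 (Set.mem_univ x) (Set.mem_univ y) ha hb hab
  have he : ((y - t) / (y - x)) • x + ((t - x) / (y - x)) • y = t := by
    simp only [smul_eq_mul]; field_simp; ring
  rw [he] at h
  simpa [smul_eq_mul] using h

set_option maxHeartbeats 2000000 in
theorem stmt_9 (T η α β D γ : ℝ) (hT : 0 < T) (hη0 : 0 < η) (hηT : η < T)
    (hα : 0 < α) (hα2 : α < 2 * T / η ^ 2)
    (hβ : 0 ≤ β) (hβ2 : β < (2 * T - α * η ^ 2) / (α * η ^ 2 - 2 * η + 2 * T))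
    (hD : D = (α * η ^ 2 - 2 * T) - β * (2 * η - α * η ^ 2 - 2 * T))
    (hγ : γ = min (η / T) (min (α * (β + 1) * η ^ 2 / (2 * T))
      (α * (β + 1) * η * (T - η) / (2 * T - α * (β + 1) * η ^ 2))))
    (f : ℝ → ℝ) (hf : ContinuousOn f (Set.Ici 0))
    (hfnn : ∀ x : ℝ, 0 ≤ x → 0 ≤ f x)
    (a : ℝ → ℝ) (ha : ContinuousOn a (Set.Icc 0 T))
    (hann : ∀ t ∈ Set.Icc (0:ℝ) T, 0 ≤ a t)
    (u : ℝ → ℝ) (hu_cont : ContinuousOn u (Set.Icc 0 T))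
    (hu_nn : ∀ t ∈ Set.Icc (0:ℝ) T, 0 ≤ u t)
    (hu_cone : ∀ t ∈ Set.Icc η T,
      γ * sSup ((fun s => |u s|) '' Set.Icc (0:ℝ) T) ≤ u t)
    (Au : ℝ → ℝ)
    (hAu : ∀ t : ℝ, Au t =
      ((β * (2 * T - α * η ^ 2) - 2 * β * (1 - α * η) * t) / D) *
        (∫ s in (0:ℝ)..η, (η - s) * (a s * f (u s)))
      + ((α * β * η - α * (β - 1) * t) / D) *
        (∫ s in (0:ℝ)..η, (η - s) ^ 2 * (a s * f (u s)))
      + ((2 * (β - 1) * t - 2 * β * η) / D) *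
        (∫ s in (0:ℝ)..T, (T - s) * (a s * f (u s)))
      - ∫ s in (0:ℝ)..t, (t - s) * (a s * f (u s))) :
    (∀ t ∈ Set.Icc (0:ℝ) T, 0 ≤ Au t) ∧
    (∀ t ∈ Set.Icc η T,
      γ * sSup ((fun s => |Au s|) '' Set.Icc (0:ℝ) T) ≤ Au t) := by
  subst hD
  -- basic numeric facts
  have hη2 : (0:ℝ) < η ^ 2 := by positivity
  have hαη2 : α * η ^ 2 < 2 * T := by
    have := (lt_div_iff₀ hη2).mp hα2; linarith
  have hdenpos : 0 < α * η ^ 2 - 2 * η + 2 * T := by nlinarith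
  have hβ2' : β * (α * η ^ 2 - 2 * η + 2 * T) < 2 * T - α * η ^ 2 :=
    (lt_div_iff₀ hdenpos).mp hβ2
  have hDneg : (α * η ^ 2 - 2 * T) - β * (2 * η - α * η ^ 2 - 2 * T) < 0 := by nlinarith
  have hDne : (α * η ^ 2 - 2 * T) - β * (2 * η - α * η ^ 2 - 2 * T) ≠ 0 := ne_of_lt hDneg
  have hkey : α * (β + 1) * η ^ 2 < 2 * T := by
    nlinarith [mul_nonneg hβ (sub_nonneg.2 hηT.le)]
  -- the clamped integrand
  set c : ℝ → ℝ := fun s => min (max s 0) T with hcdef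
  have hc_cont : Continuous c := (continuous_id.max continuous_const).min continuous_const
  have hc_mem : ∀ s, c s ∈ Set.Icc (0:ℝ) T :=
    fun s => ⟨le_min (le_max_right _ _) hT.le, min_le_right _ _⟩
  have hc_eq : ∀ s ∈ Set.Icc (0:ℝ) T, c s = s := by
    intro s hs
    simp only [hcdef]
    rw [max_eq_left hs.1, min_eq_left hs.2]
  set G : ℝ → ℝ := fun s => a (c s) * f (u (c s)) with hGdef
  have hG_cont : Continuous G :=
    (ha.comp_continuous hc_cont hc_mem).mul
      (hf.comp_continuous (hu_cont.comp_continuous hc_cont hc_mem)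
        (fun x => hu_nn _ (hc_mem x)))
  have hG_nn : ∀ s, 0 ≤ G s := fun s =>
    mul_nonneg (hann _ (hc_mem s)) (hfnn _ (hu_nn _ (hc_mem s)))
  -- integrals
  set J0 : ℝ → ℝ := fun t => ∫ s in (0:ℝ)..t, G s with hJ0def
  set J1 : ℝ → ℝ := fun t => ∫ s in (0:ℝ)..t, s * G s with hJ1def
  set J2 : ℝ → ℝ := fun t => ∫ s in (0:ℝ)..t, s ^ 2 * G s with hJ2def
  set I1 : ℝ := ∫ s in (0:ℝ)..η, (η - s) * G s with hI1def
  set I2 : ℝ := ∫ s in (0:ℝ)..η, (η - s) ^ 2 * G s with hI2def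
  set I3 : ℝ := ∫ s in (0:ℝ)..T, (T - s) * G s with hI3def
  have hint : ∀ (w : ℝ → ℝ), Continuous w → ∀ (x y : ℝ),
      IntervalIntegrable (fun s => w s * G s) volume x y :=
    fun w hw x y => (hw.mul hG_cont).intervalIntegrable x y
  -- congruence with the original integrand
  have hcongr : ∀ (x : ℝ), 0 ≤ x → x ≤ T → ∀ (w : ℝ → ℝ),
      (∫ s in (0:ℝ)..x, w s * (a s * f (u s))) = ∫ s in (0:ℝ)..x, w s * G s := by
    intro x hx0 hxT w
    apply intervalIntegral.integral_congr
    intro s hs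
    rw [uIcc_of_le hx0] at hs
    have hsT : s ∈ Set.Icc (0:ℝ) T := ⟨hs.1, hs.2.trans hxT⟩
    simp only [hGdef, hc_eq s hsT]
  -- expansions
  have hi1 : ∀ r x y : ℝ, IntervalIntegrable (fun s => r * G s) volume x y :=
    fun r x y => (continuous_const.mul hG_cont).intervalIntegrable x y
  have hi2 : ∀ x y : ℝ, IntervalIntegrable (fun s : ℝ => s * G s) volume x y :=
    fun x y => (continuous_id'.mul hG_cont).intervalIntegrable x y
  have hi3 : ∀ x y : ℝ, IntervalIntegrable (fun s : ℝ => s ^ 2 * G s) volume x y :=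
    fun x y => ((continuous_pow 2).mul hG_cont).intervalIntegrable x y
  have hexp : ∀ x : ℝ, (∫ s in (0:ℝ)..x, (x - s) * G s) = x * J0 x - J1 x := by
    intro x
    have h1 : ∀ s : ℝ, (x - s) * G s = x * G s - s * G s := fun s => by ring
    simp only [h1]
    rw [intervalIntegral.integral_sub (hi1 x 0 x) (hi2 0 x),
      intervalIntegral.integral_const_mul]
  have hexp2 : I2 = η ^ 2 * J0 η - 2 * η * J1 η + J2 η := by
    have h1 : ∀ s : ℝ, (η - s) ^ 2 * G s = (η ^ 2 * G s - (2 * η) * (s * G s)) + s ^ 2 * G s :=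
      fun s => by ring
    simp only [hI2def, h1]
    rw [intervalIntegral.integral_add ((hi1 (η^2) 0 η).sub ((hi2 0 η).const_mul (2*η)))
        (hi3 0 η),
      intervalIntegral.integral_sub (hi1 (η^2) 0 η) ((hi2 0 η).const_mul (2*η)),
      intervalIntegral.integral_const_mul, intervalIntegral.integral_const_mul]
  -- the function v
  set c0 : ℝ := (β * (2 * T - α * η ^ 2) * I1 + α * β * η * I2 - 2 * β * η * I3) /
    (α * η ^ 2 - 2 * T - β * (2 * η - α * η ^ 2 - 2 * T)) with hc0def
  set c1 : ℝ := (-(2 * β * (1 - α * η)) * I1 - α * (β - 1) * I2 + 2 * (β - 1) * I3) /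
    (α * η ^ 2 - 2 * T - β * (2 * η - α * η ^ 2 - 2 * T)) with hc1def
  set v : ℝ → ℝ := fun t => c0 + c1 * t - (t * J0 t - J1 t) with hvdef
  have hveq : ∀ t ∈ Set.Icc (0:ℝ) T, Au t = v t := by
    intro t ht
    rw [hAu t, hcongr η hη0.le hηT.le (fun s => η - s),
      hcongr η hη0.le hηT.le (fun s => (η - s) ^ 2),
      hcongr T hT.le le_rfl (fun s => T - s),
      hcongr t ht.1 ht.2 (fun s => t - s), hexp t]
    simp only [hvdef, hc0def, hc1def, ← hI1def, ← hI2def, ← hI3def]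
    field_simp
    ring
  -- derivatives
  have hJ0d : ∀ x : ℝ, HasDerivAt J0 (G x) x :=
    fun x => (hG_cont.integral_hasStrictDerivAt 0 x).hasDerivAt
  have hJ1d : ∀ x : ℝ, HasDerivAt J1 (x * G x) x :=
    fun x => ((continuous_id'.mul hG_cont).integral_hasStrictDerivAt 0 x).hasDerivAt
  have hJ2d : ∀ x : ℝ, HasDerivAt J2 (x ^ 2 * G x) x :=
    fun x => (((continuous_pow 2).mul hG_cont).integral_hasStrictDerivAt 0 x).hasDerivAt
  have hvd : ∀ x : ℝ, HasDerivAt v (c1 - J0 x) x := by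
    intro x
    have h1 : HasDerivAt (fun t : ℝ => t * J0 t) (1 * J0 x + x * G x) x :=
      (hasDerivAt_id x).mul (hJ0d x)
    have h2 : HasDerivAt v (0 + c1 * 1 - (1 * J0 x + x * G x - x * G x)) x :=
      ((hasDerivAt_const x c0).add ((hasDerivAt_id x).const_mul c1)).sub (h1.sub (hJ1d x))
    convert h2 using 1
    ring
  have hv_diff : Differentiable ℝ v := fun x => (hvd x).differentiableAt
  have hv_cont : Continuous v := hv_diff.continuous
  have hJ0mono : ∀ x y : ℝ, x ≤ y → J0 x ≤ J0 y := by
    intro x y hxy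
    have hadd : (∫ s in (0:ℝ)..x, G s) + (∫ s in x..y, G s) = ∫ s in (0:ℝ)..y, G s :=
      intervalIntegral.integral_add_adjacent_intervals
        (hG_cont.intervalIntegrable 0 x) (hG_cont.intervalIntegrable x y)
    have hnn : 0 ≤ ∫ s in x..y, G s :=
      intervalIntegral.integral_nonneg hxy (fun s _ => hG_nn s)
    simp only [hJ0def]
    linarith [hadd]
  have hconc : ConcaveOn ℝ Set.univ v := by
    apply AntitoneOn.concaveOn_of_deriv convex_univ hv_cont.continuousOn
      hv_diff.differentiableOn
    rw [interior_univ]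
    intro x _ y _ hxy
    rw [(hvd x).deriv, (hvd y).deriv]
    linarith [hJ0mono x y hxy]
  -- values at special points
  have hJ00 : J0 0 = 0 := intervalIntegral.integral_same
  have hJ10 : J1 0 = 0 := intervalIntegral.integral_same
  have hv0 : v 0 = c0 := by simp [hvdef, hJ00, hJ10]
  have hvη : v η = c0 + c1 * η - I1 := by
    simp only [hvdef]
    rw [hI1def, hexp η]
  have hvT : v T = c0 + c1 * T - I3 := by
    simp only [hvdef]
    rw [hI3def, hexp T]
  -- boundary condition 1
  have hBC1 : v 0 = β * v η := by
    rw [hv0, hvη, hc0def, hc1def]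
    generalize hDg : (α * η ^ 2 - 2 * T) - β * (2 * η - α * η ^ 2 - 2 * T) = Dg at hDne ⊢
    field_simp
    rw [← hDg]
    ring
  -- integral of the convolution part via FTC
  have hF_cont : Continuous (fun t : ℝ => t * J0 t - J1 t) := by
    have : Differentiable ℝ (fun t : ℝ => t * J0 t - J1 t) := by
      intro x
      exact (((hasDerivAt_id x).mul (hJ0d x)).sub (hJ1d x)).differentiableAt
    exact this.continuous
  have hintF : (∫ t in (0:ℝ)..η, (t * J0 t - J1 t)) =
      (η ^ 2 * J0 η - 2 * (η * J1 η) + J2 η) / 2 := by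
    have hH : ∀ x ∈ Set.uIcc (0:ℝ) η, HasDerivAt
        (fun t : ℝ => (t ^ 2 * J0 t - 2 * (t * J1 t) + J2 t) / 2) (x * J0 x - J1 x) x := by
      intro x _
      have h1 : HasDerivAt (fun t : ℝ => t ^ 2 * J0 t) (2 * x ^ 1 * J0 x + x ^ 2 * G x) x :=
        (hasDerivAt_pow 2 x).mul (hJ0d x)
      have h2 : HasDerivAt (fun t : ℝ => t * J1 t) (1 * J1 x + x * (x * G x)) x :=
        (hasDerivAt_id x).mul (hJ1d x)
      have h3 : HasDerivAt (fun t : ℝ => (t ^ 2 * J0 t - 2 * (t * J1 t) + J2 t) / 2)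
          ((2 * x ^ 1 * J0 x + x ^ 2 * G x - 2 * (1 * J1 x + x * (x * G x)) + x ^ 2 * G x) / 2)
          x := ((h1.sub (h2.const_mul 2)).add (hJ2d x)).div_const 2
      convert h3 using 1
      ring
    have := intervalIntegral.integral_eq_sub_of_hasDerivAt hH
      (hF_cont.intervalIntegrable 0 η)
    rw [this]
    simp only [hJ00, hJ10]
    have hJ20 : J2 0 = 0 := intervalIntegral.integral_same
    rw [hJ20]
    ring
  have hintv : (∫ t in (0:ℝ)..η, v t) = c0 * η + c1 * (η ^ 2 / 2) - I2 / 2 := by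
    have h1 : (∫ t in (0:ℝ)..η, v t) =
        (∫ t in (0:ℝ)..η, (c0 + c1 * t)) - ∫ t in (0:ℝ)..η, (t * J0 t - J1 t) := by
      rw [← intervalIntegral.integral_sub (f := fun t => c0 + c1 * t) (g := fun t => t * J0 t - J1 t)
        ((continuous_const.add (continuous_const.mul continuous_id')).intervalIntegrable 0 η)
        (hF_cont.intervalIntegrable 0 η)]
    rw [h1, hintF, intervalIntegral.integral_add (f := fun _ => c0) (g := fun t => c1 * t)
        (continuous_const.intervalIntegrable 0 η)
        ((continuous_const.mul continuous_id').intervalIntegrable 0 η),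
      intervalIntegral.integral_const, intervalIntegral.integral_const_mul,
      integral_id, hexp2]
    simp only [smul_eq_mul]
    ring
  -- boundary condition 2
  have hBC2 : v T = α * ∫ t in (0:ℝ)..η, v t := by
    rw [hvT, hintv, hc0def, hc1def]
    generalize hDg : (α * η ^ 2 - 2 * T) - β * (2 * η - α * η ^ 2 - 2 * T) = Dg at hDne ⊢
    field_simp
    rw [← hDg]
    ring
  -- kk = α η (β+1)/2
  have hβ1 : (0:ℝ) < β + 1 := by linarith
  have hkkpos : (0:ℝ) < α * η * (β + 1) / 2 := by positivity
  have hkη : η * (α * η * (β + 1) / 2) < T := by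
    have h : η * (α * η * (β + 1) / 2) = α * (β + 1) * η ^ 2 / 2 := by ring
    rw [h]; linarith [hkey]
  -- chord from 0 to η, integrated
  have hIv_ge : (η / 2) * (v 0 + v η) ≤ ∫ t in (0:ℝ)..η, v t := by
    have h2 : ∀ t : ℝ, ((η - t) / (η - 0)) * v 0 + ((t - 0) / (η - 0)) * v η
        = v 0 + ((v η - v 0) / η) * t := by
      intro t; simp only [sub_zero]; field_simp; ring
    have h1 : (∫ t in (0:ℝ)..η, (v 0 + ((v η - v 0) / η) * t)) ≤ ∫ t in (0:ℝ)..η, v t := by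
      apply intervalIntegral.integral_mono_on (f := fun t => v 0 + ((v η - v 0) / η) * t) hη0.le
        ((continuous_const.add (continuous_const.mul continuous_id')).intervalIntegrable 0 η)
        (hv_cont.intervalIntegrable 0 η)
      intro t ht
      rw [← h2 t]
      exact chord_aux_s9 hconc hη0 ht.1 ht.2
    have h3 : (∫ t in (0:ℝ)..η, (v 0 + ((v η - v 0) / η) * t))
        = η * v 0 + ((v η - v 0) / η) * (η ^ 2 / 2) := by
      rw [intervalIntegral.integral_add (f := fun _ => v 0) (g := fun t => ((v η - v 0) / η) * t) (continuous_const.intervalIntegrable 0 η)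
        ((continuous_const.mul continuous_id').intervalIntegrable 0 η),
        intervalIntegral.integral_const, intervalIntegral.integral_const_mul, integral_id]
      simp only [smul_eq_mul]
      ring
    have h4 : (η / 2) * (v 0 + v η) = η * v 0 + ((v η - v 0) / η) * (η ^ 2 / 2) := by
      field_simp
      ring
    rw [h4, ← h3]
    exact h1
  -- key step : kk * v η ≤ v T
  have hstep : (α * η * (β + 1) / 2) * v η ≤ v T := by
    rw [hBC2]
    have h5 : (α * η * (β + 1) / 2) * v η = α * ((η / 2) * (v 0 + v η)) := by
      rw [hBC1]; ring
    rw [h5]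
    exact mul_le_mul_of_nonneg_left hIv_ge hα.le
  -- chord at η between 0 and T (multiplied through by T)
  have hchη : (T - η) * (β * v η) + η * v T ≤ T * v η := by
    have hch := chord_aux_s9 hconc (x := 0) (y := T) (t := η) hT hη0.le hηT.le
    have hmul := mul_le_mul_of_nonneg_left hch hT.le
    have hexpand : T * (((T - η) / (T - 0)) * v 0 + ((η - 0) / (T - 0)) * v T)
        = (T - η) * v 0 + η * v T := by
      simp only [sub_zero]
      field_simp
    rw [hexpand, hBC1] at hmul
    exact hmul
  clear_value v c0 c1 I1 I2 I3 J0 J1 J2 G c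
  -- v T ≥ 0
  have hvT0 : 0 ≤ v T := by
    by_contra hneg
    push_neg at hneg
    have hvηneg : v η < 0 := by
      by_contra h
      push_neg at h
      linarith [hstep, mul_nonneg hkkpos.le h]
    have hpos : 0 < T - (T - η) * β - η * (α * η * (β + 1) / 2) := by linarith [hβ2']
    have h6 : η * ((α * η * (β + 1) / 2) * v η) ≤ η * v T :=
      mul_le_mul_of_nonneg_left hstep hη0.le
    linarith [hchη, h6, mul_neg_of_neg_of_pos hvηneg hpos]
  have hμpos : 0 < T - (T - η) * β := by
    linarith [hβ2', mul_nonneg hβ (mul_pos hα hη2).le, mul_pos hα hη2]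
  have hvη0 : 0 ≤ v η := by
    by_contra h
    push_neg at h
    linarith [hchη, mul_nonneg hη0.le hvT0, mul_neg_of_neg_of_pos h hμpos]
  have hv00 : 0 ≤ v 0 := by
    rw [hBC1]; exact mul_nonneg hβ hvη0
  have hvnn : ∀ t ∈ Set.Icc (0:ℝ) T, 0 ≤ v t := by
    intro t ht
    have hch := chord_aux_s9 hconc (x := 0) (y := T) (t := t) hT ht.1 ht.2
    have hU : (0:ℝ) ≤ T - 0 := by linarith
    have h1 : 0 ≤ ((T - t) / (T - 0)) * v 0 :=
      mul_nonneg (div_nonneg (show (0:ℝ) ≤ T - t by linarith [ht.2]) hU) hv00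
    have h2 : 0 ≤ ((t - 0) / (T - 0)) * v T :=
      mul_nonneg (div_nonneg (show (0:ℝ) ≤ t - 0 by linarith [ht.1]) hU) hvT0
    linarith only [hch, h1, h2]
  -- gamma facts
  have hηT1 : η / T ≤ 1 := le_of_lt ((div_lt_one hT).2 hηT)
  have hden3 : 0 < 2 * T - α * (β + 1) * η ^ 2 := by linarith [hkey]
  have hγ1 : γ ≤ η / T := by rw [hγ]; exact min_le_left _ _
  have hγ2 : γ ≤ α * (β + 1) * η ^ 2 / (2 * T) := by
    rw [hγ]; exact le_trans (min_le_right _ _) (min_le_left _ _)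
  have hγ3 : γ ≤ α * (β + 1) * η * (T - η) / (2 * T - α * (β + 1) * η ^ 2) := by
    rw [hγ]; exact le_trans (min_le_right _ _) (min_le_right _ _)
  have hγ0 : 0 ≤ γ := by
    rw [hγ]
    refine le_min (by positivity) (le_min ?_ ?_)
    · exact div_nonneg (mul_nonneg (mul_nonneg hα.le hβ1.le) (sq_nonneg η)) (by linarith)
    · exact div_nonneg (mul_nonneg (mul_nonneg (mul_nonneg hα.le hβ1.le) hη0.le)
        (by linarith)) hden3.le
  have hγle1 : γ ≤ 1 := hγ1.trans hηT1
  -- abbreviation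
  set kk : ℝ := α * η * (β + 1) / 2 with hkkdef
  have hTkη : 0 < T - η * kk := by linarith [hkη]
  have e2 : kk * (η / T) = α * (β + 1) * η ^ 2 / (2 * T) := by
    rw [hkkdef]; field_simp
  have hne2 : T - η * (α * η * (β + 1) / 2) ≠ 0 := by
    have h := hTkη; rw [hkkdef] at h; exact h.ne'
  have e3 : α * (β + 1) * η * (T - η) / (2 * T - α * (β + 1) * η ^ 2)
      = kk * ((T - η) / (T - η * kk)) := by
    rw [hkkdef, ← mul_div_assoc, div_eq_div_iff hden3.ne' hne2]
    ring
  -- maximum point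
  obtain ⟨w, hw, hwmax⟩ := isCompact_Icc.exists_isMaxOn (Set.nonempty_Icc.2 hT.le)
    hv_cont.continuousOn
  have hvw0 : 0 ≤ v w := hvnn w hw
  have hM : sSup ((fun s => |Au s|) '' Set.Icc (0:ℝ) T) ≤ v w := by
    apply Real.sSup_le _ hvw0
    rintro x ⟨s, hs, rfl⟩
    show |Au s| ≤ v w
    rw [hveq s hs, abs_of_nonneg (hvnn s hs)]
    exact hwmax hs
  -- the two key estimates
  have hkeyη : γ * v w ≤ v η ∧ γ * v w ≤ v T := by
    rcases le_or_gt η w with hηw | hwη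
    · -- case A : η ≤ w
      have hA : (η / T) * v w ≤ v η := by
        rcases eq_or_lt_of_le hηw with heq | hlt
        · rw [← heq]
          linarith only [mul_nonneg (sub_nonneg.2 hηT1) hvη0]
        · have hw0 : 0 < w := lt_trans hη0 hlt
          have hch := chord_aux_s9 hconc (x := 0) (y := w) (t := η) hw0 hη0.le hlt.le
          have h1 : 0 ≤ ((w - η) / (w - 0)) * v 0 :=
            mul_nonneg (div_nonneg (by linarith) (by linarith)) hv00
          have h2 : (η / T) * v w ≤ ((η - 0) / (w - 0)) * v w := by
            apply mul_le_mul_of_nonneg_right _ hvw0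
            rw [sub_zero, sub_zero, div_le_div_iff₀ hT hw0]
            linarith only [mul_le_mul_of_nonneg_left hw.2 hη0.le]
          linarith only [hch, h1, h2]
      constructor
      · calc γ * v w ≤ (η / T) * v w := mul_le_mul_of_nonneg_right hγ1 hvw0
          _ ≤ v η := hA
      · have h3 : kk * ((η / T) * v w) ≤ kk * v η :=
          mul_le_mul_of_nonneg_left hA hkkpos.le
        have h4 : γ * v w ≤ (kk * (η / T)) * v w := by
          apply mul_le_mul_of_nonneg_right _ hvw0
          rw [e2]; exact hγ2
        have e4 : (kk * (η / T)) * v w = kk * ((η / T) * v w) := by ring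
        have hstep' : kk * v η ≤ v T := hstep
        linarith only [h3, h4, e4, hstep']
    · -- case B : w < η
      have hTw : 0 < T - w := by linarith [hw.2]
      set lam : ℝ := (η - w) / (T - w) with hlamdef
      have hch := chord_aux_s9 hconc (x := w) (y := T) (t := η)
        (lt_of_lt_of_le hwη hηT.le) hwη.le hηT.le
      have hlam0 : 0 ≤ lam := div_nonneg (by linarith) hTw.le
      have hlamle : lam ≤ η / T := by
        rw [hlamdef, div_le_div_iff₀ hTw hT]
        linarith only [mul_nonneg hw.1 (sub_nonneg.2 hηT.le)]
      have hone : (T - η) / (T - w) = 1 - lam := by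
        rw [hlamdef]
        field_simp
        ring
      have hlamT : lam * T ≤ η := (le_div_iff₀ hT).mp hlamle
      have hlamk1 : lam * kk < 1 := by
        have h5 : lam * kk ≤ (η / T) * kk := mul_le_mul_of_nonneg_right hlamle hkkpos.le
        have h6 : (η / T) * kk < 1 := by
          rw [div_mul_eq_mul_div, div_lt_one hT]
          linarith [hkη]
        linarith only [h5, h6]
      have h1mk : 0 ≤ 1 - lam * kk := by linarith only [hlamk1]
      have hstep' : kk * v η ≤ v T := hstep
      -- the chord inequality rewritten
      rw [hone] at hch
      -- hch : (1 - lam) * v w + lam * v T ≤ v η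
      have hB : (1 - lam) * v w ≤ (1 - lam * kk) * v η := by
        have h7 : lam * (kk * v η) ≤ lam * v T := mul_le_mul_of_nonneg_left hstep' hlam0
        linarith only [hch, h7]
      -- c₀ inequality, valid when kk ≤ 1
      have hc0le : kk ≤ 1 → ((T - η) / (T - η * kk)) * (1 - lam * kk) ≤ 1 - lam := by
        intro hk1
        rw [div_mul_eq_mul_div, div_le_iff₀ hTkη]
        linarith only [mul_nonneg (sub_nonneg.2 hk1) (sub_nonneg.2 hlamT)]
      have hstar : γ * (1 - lam * kk) ≤ 1 - lam := by
        rcases le_or_gt kk 1 with hk1 | hk1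
        · have hγc0 : γ ≤ (T - η) / (T - η * kk) := by
            refine hγ3.trans ?_
            rw [e3]
            have h8 : kk * ((T - η) / (T - η * kk)) ≤ 1 * ((T - η) / (T - η * kk)) :=
              mul_le_mul_of_nonneg_right hk1
                (div_nonneg (by linarith) hTkη.le)
            linarith only [h8]
          calc γ * (1 - lam * kk) ≤ ((T - η) / (T - η * kk)) * (1 - lam * kk) :=
                mul_le_mul_of_nonneg_right hγc0 h1mk
            _ ≤ 1 - lam := hc0le hk1
        · have h9 : γ * (1 - lam * kk) ≤ 1 * (1 - lam * kk) :=
            mul_le_mul_of_nonneg_right hγle1 h1mk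
          have h10 : lam * 1 ≤ lam * kk := mul_le_mul_of_nonneg_left hk1.le hlam0
          linarith only [h9, h10]
      have hstar2 : γ * (1 - lam * kk) ≤ kk * (1 - lam) := by
        rcases le_or_gt kk 1 with hk1 | hk1
        · have hγ3' : γ ≤ kk * ((T - η) / (T - η * kk)) := by rw [← e3]; exact hγ3
          have h11 : γ * (1 - lam * kk) ≤ (kk * ((T - η) / (T - η * kk))) * (1 - lam * kk) :=
            mul_le_mul_of_nonneg_right hγ3' h1mk
          have h12 : kk * (((T - η) / (T - η * kk)) * (1 - lam * kk)) ≤ kk * (1 - lam) :=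
            mul_le_mul_of_nonneg_left (hc0le hk1) hkkpos.le
          have e5 : (kk * ((T - η) / (T - η * kk))) * (1 - lam * kk)
              = kk * (((T - η) / (T - η * kk)) * (1 - lam * kk)) := by ring
          linarith only [h11, h12, e5]
        · have h9 : γ * (1 - lam * kk) ≤ 1 * (1 - lam * kk) :=
            mul_le_mul_of_nonneg_right hγle1 h1mk
          have h10 : lam * 1 ≤ lam * kk := mul_le_mul_of_nonneg_left hk1.le hlam0
          have h13 : 1 * (1 - lam) ≤ kk * (1 - lam) :=
            mul_le_mul_of_nonneg_right hk1.le (by linarith [hlamle, hηT1])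
          linarith only [h9, h10, h13]
      constructor
      · -- γ v w ≤ v η
        have h14 : (γ * (1 - lam * kk)) * v w ≤ (1 - lam) * v w :=
          mul_le_mul_of_nonneg_right hstar hvw0
        have h15 : (1 - lam * kk) * (γ * v w) ≤ (1 - lam * kk) * v η := by
          linarith only [h14, hB]
        refine le_of_mul_le_mul_left h15 ?_
        rcases lt_or_eq_of_le h1mk with h | h
        · exact h
        · exact absurd h (by linarith [hlamk1])
      · -- γ v w ≤ v T
        have h16 : (γ * (1 - lam * kk)) * v w ≤ (kk * (1 - lam)) * v w :=
          mul_le_mul_of_nonneg_right hstar2 hvw0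
        have h17 : kk * ((1 - lam) * v w) ≤ kk * ((1 - lam * kk) * v η) :=
          mul_le_mul_of_nonneg_left hB hkkpos.le
        have h18 : (1 - lam * kk) * (kk * v η) ≤ (1 - lam * kk) * v T :=
          mul_le_mul_of_nonneg_left hstep' h1mk
        have h19 : (1 - lam * kk) * (γ * v w) ≤ (1 - lam * kk) * v T := by
          linarith only [h16, h17, h18]
        refine le_of_mul_le_mul_left h19 ?_
        rcases lt_or_eq_of_le h1mk with h | h
        · exact h
        · exact absurd h (by linarith [hlamk1])
  -- conclusion
  constructor
  · intro t ht
    rw [hveq t ht]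
    exact hvnn t ht
  · intro t ht
    have htIcc : t ∈ Set.Icc (0:ℝ) T := ⟨le_trans hη0.le ht.1, ht.2⟩
    rw [hveq t htIcc]
    have hch := chord_aux_s9 hconc (x := η) (y := T) (t := t) hηT ht.1 ht.2
    have hd1 : 0 ≤ (T - t) / (T - η) := div_nonneg (by linarith [ht.2]) (by linarith)
    have hd2 : 0 ≤ (t - η) / (T - η) := div_nonneg (by linarith [ht.1]) (by linarith)
    have hab : (T - t) / (T - η) + (t - η) / (T - η) = 1 := by
      rw [← add_div, show T - t + (t - η) = T - η by ring,
        div_self (show T - η ≠ 0 from (show (0:ℝ) < T - η by linarith).ne')]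
    have hγM : γ * sSup ((fun s => |Au s|) '' Set.Icc (0:ℝ) T) ≤ γ * v w :=
      mul_le_mul_of_nonneg_left hM hγ0
    have h1 : ((T - t) / (T - η)) * (γ * v w) ≤ ((T - t) / (T - η)) * v η :=
      mul_le_mul_of_nonneg_left hkeyη.1 hd1
    have h2 : ((t - η) / (T - η)) * (γ * v w) ≤ ((t - η) / (T - η)) * v T :=
      mul_le_mul_of_nonneg_left hkeyη.2 hd2
    have e6 : ((T - t) / (T - η)) * (γ * v w) + ((t - η) / (T - η)) * (γ * v w)
        = ((T - t) / (T - η) + (t - η) / (T - η)) * (γ * v w) := by ring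
    rw [hab] at e6
    linarith only [h1, h2, hch, hγM, e6]
end

section
/- Let 0 < p < 1. Then there exists a twice continuously differentiable function u : [0,2] → ℝ satisfying u''(t) + t · u(t)^p = 0 for all t ∈ (0,2), u(0) = (1/2) u(3/2), u(2) = ∫₀^{3/2} u(s) ds, and u(t) > 0 for all t ∈ (0,2). -/
open MeasureTheory intervalIntegral Set Filter

noncomputable def bb (p : ℝ) : ℝ := 38 ^ (1/(1-p))
noncomputable def hh (p : ℝ) (w : ℝ → ℝ) (s : ℝ) : ℝ := s * w s ^ p
noncomputable def I1 (p : ℝ) (w : ℝ → ℝ) : ℝ := ∫ s in (0:ℝ)..(3/2), (3/2 - s) * hh p w s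
noncomputable def I2 (p : ℝ) (w : ℝ → ℝ) : ℝ := ∫ s in (0:ℝ)..(2:ℝ), (2 - s) * hh p w s
noncomputable def Jj (p : ℝ) (w : ℝ → ℝ) : ℝ := ∫ s in (0:ℝ)..(3/2), (3/2 - s)^2/2 * hh p w s
noncomputable def Bc (p : ℝ) (w : ℝ → ℝ) : ℝ := 8*I2 p w - 8*Jj p w - 4*I1 p w
noncomputable def Ac (p : ℝ) (w : ℝ → ℝ) : ℝ := 3/2*Bc p w - I1 p w
noncomputable def Tt (p : ℝ) (w : ℝ → ℝ) (t : ℝ) : ℝ :=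
  Ac p w + Bc p w * t - ∫ s in (0:ℝ)..t, (t - s) * hh p w s
noncomputable def mm (s : ℝ) : ℝ := if s ≤ 3/2 then 3/2 - s else 0
noncomputable def mm2 (s : ℝ) : ℝ := if s ≤ 3/2 then (3/2 - s)^2/2 else 0
noncomputable def nn (t s : ℝ) : ℝ := if s ≤ t then t - s else 0
noncomputable def Kk (t s : ℝ) : ℝ := (3/2 + t) * (8*(2 - s) - 8*mm2 s - 4*mm s) - mm s - nn t s
def cl (t : ℝ) : ℝ := max 0 (min 2 t)
noncomputable def seqU (p : ℝ) : ℕ → ℝ → ℝ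
  | 0 => fun _ => 1
  | n+1 => fun t => Tt p (seqU p n) (cl t)
noncomputable def ustar (p : ℝ) (t : ℝ) : ℝ := ⨆ n, seqU p n t

/-- bounded measurable implies interval integrable -/
lemma II_of_bdd {f : ℝ → ℝ} {C a b : ℝ} (hm : Measurable f)
    (h : ∀ s ∈ Set.uIoc a b, |f s| ≤ C) : IntervalIntegrable f volume a b := by
  rw [intervalIntegrable_iff]
  refine Integrable.mono' (g := fun _ => C) (integrableOn_const measure_Ioc_lt_top.ne)
    hm.aestronglyMeasurable.restrict ?_
  exact (ae_restrict_iff' measurableSet_uIoc).2 (ae_of_all _ h)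

lemma bb_one_le {p : ℝ} (hp0 : 0 < p) (hp1 : p < 1) : 1 ≤ bb p :=
  Real.one_le_rpow (by norm_num) (by
    have : 0 < 1 - p := by linarith
    positivity)

lemma bb_eq {p : ℝ} (hp0 : 0 < p) (hp1 : p < 1) : 38 * bb p ^ p = bb p := by
  have h1 : (0:ℝ) < 1 - p := by linarith
  unfold bb
  rw [← Real.rpow_mul (by norm_num : (0:ℝ) ≤ 38)]
  rw [show (38:ℝ) * 38 ^ (1/(1-p) * p) = 38 ^ (1 + 1/(1-p)*p) by
    rw [Real.rpow_add (by norm_num : (0:ℝ) < 38), Real.rpow_one]]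
  congr 1
  field_simp
  ring

example : True := trivial
lemma mm_nonneg {s : ℝ} : 0 ≤ mm s := by
  unfold mm; split <;> [linarith; exact le_rfl]
lemma mm2_nonneg {s : ℝ} : 0 ≤ mm2 s := by
  unfold mm2; split <;> [positivity; exact le_rfl]
lemma nn_nonneg {t s : ℝ} : 0 ≤ nn t s := by
  unfold nn; split <;> [linarith; exact le_rfl]

lemma Kk_nonneg {t s : ℝ} (ht : t ∈ Set.Icc (0:ℝ) 2) (hs : s ∈ Set.Icc (0:ℝ) 2) :
    0 ≤ Kk t s := by
  obtain ⟨ht0, ht2⟩ := ht; obtain ⟨hs0, hs2⟩ := hs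
  unfold Kk mm mm2 nn
  by_cases h1 : s ≤ 3/2 <;> by_cases h2 : s ≤ t <;> simp only [h1, h2, if_true, if_false] <;>
    nlinarith [sq_nonneg s, sq_nonneg (s - 3/2), mul_nonneg ht0 hs0]

lemma Kk_le {t s : ℝ} (ht : t ∈ Set.Icc (0:ℝ) 2) (hs : s ∈ Set.Icc (0:ℝ) 2) :
    Kk t s ≤ 28 * (2 - s) := by
  obtain ⟨ht0, ht2⟩ := ht; obtain ⟨hs0, hs2⟩ := hs
  unfold Kk mm mm2 nn
  by_cases h1 : s ≤ 3/2 <;> by_cases h2 : s ≤ t <;> simp only [h1, h2, if_true, if_false] <;>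
    nlinarith [sq_nonneg (s - 3/2)]

lemma Kk_lower {t s : ℝ} (ht : t ∈ Set.Icc (0:ℝ) 2) (hs : s ∈ Set.Icc (0:ℝ) 2) :
    (if s ≤ 3/2 then s else 0) ≤ Kk t s := by
  obtain ⟨ht0, ht2⟩ := ht; obtain ⟨hs0, hs2⟩ := hs
  unfold Kk mm mm2 nn
  by_cases h1 : s ≤ 3/2 <;> by_cases h2 : s ≤ t <;> simp only [h1, h2, if_true, if_false] <;>
    nlinarith [sq_nonneg (s - 3/2), mul_nonneg ht0 hs0]

lemma Kk_abs_le {t s : ℝ} (ht : t ∈ Set.Icc (0:ℝ) 2) (hs : s ∈ Set.Icc (0:ℝ) 2) :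
    |Kk t s| ≤ 56 := by
  rw [abs_le]
  constructor
  · linarith [Kk_nonneg ht hs]
  · have := Kk_le ht hs; have := hs.1; linarith

lemma Kk_meas (t : ℝ) : Measurable (Kk t) := by
  unfold Kk mm mm2 nn
  apply Measurable.sub; apply Measurable.sub
  · exact (measurable_const.mul (((measurable_const.sub measurable_id).const_mul 8
      |>.sub (Measurable.ite (measurableSet_le measurable_id measurable_const)
        (by fun_prop) measurable_const |>.const_mul 8)).sub
      ((Measurable.ite (measurableSet_le measurable_id measurable_const)
        (by fun_prop) measurable_const).const_mul 4)))
  · exact Measurable.ite (measurableSet_le measurable_id measurable_const) (by fun_prop)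
      measurable_const
  · exact Measurable.ite (measurableSet_le measurable_id measurable_const) (by fun_prop)
      measurable_const
lemma bb_pos {p : ℝ} : 0 < bb p := Real.rpow_pos_of_pos (by norm_num) _
lemma bbp_pos {p q : ℝ} : 0 < bb p ^ q := Real.rpow_pos_of_pos bb_pos _

def Mem (p : ℝ) (w : ℝ → ℝ) : Prop := Measurable w ∧ ∀ t, w t ∈ Set.Icc 1 (bb p)

lemma rpow_cont {p : ℝ} (hp0 : 0 < p) : Continuous fun x : ℝ => x ^ p :=
  continuous_id.rpow_const fun _ => Or.inr hp0.le

lemma Mem.hh_meas {p : ℝ} {w : ℝ → ℝ} (hp0 : 0 < p) (hw : Mem p w) :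
    Measurable (hh p w) :=
  measurable_id.mul ((rpow_cont hp0).measurable.comp hw.1)

lemma Mem.one_le_pow {p : ℝ} {w : ℝ → ℝ} (hp0 : 0 < p) (hw : Mem p w) (s : ℝ) :
    1 ≤ w s ^ p := Real.one_le_rpow (hw.2 s).1 hp0.le

lemma Mem.pow_le {p : ℝ} {w : ℝ → ℝ} (hp0 : 0 < p) (hw : Mem p w) (s : ℝ) :
    w s ^ p ≤ bb p ^ p :=
  Real.rpow_le_rpow (le_trans zero_le_one (hw.2 s).1) (hw.2 s).2 hp0.le

lemma hh_lb {p : ℝ} {w : ℝ → ℝ} (hp0 : 0 < p) (hw : Mem p w) {s : ℝ} (hs : 0 ≤ s) :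
    s ≤ hh p w s := by
  have := hw.one_le_pow hp0 s
  calc s = s * 1 := by ring
  _ ≤ s * w s ^ p := by apply mul_le_mul_of_nonneg_left this hs

lemma hh_nonneg {p : ℝ} {w : ℝ → ℝ} (hp0 : 0 < p) (hw : Mem p w) {s : ℝ} (hs : 0 ≤ s) :
    0 ≤ hh p w s := le_trans hs (hh_lb hp0 hw hs)

lemma hh_ub {p : ℝ} {w : ℝ → ℝ} (hp0 : 0 < p) (hw : Mem p w) {s : ℝ} (hs : 0 ≤ s) :
    hh p w s ≤ s * bb p ^ p :=
  mul_le_mul_of_nonneg_left (hw.pow_le hp0 s) hs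

lemma hh_abs_global {p : ℝ} {w : ℝ → ℝ} (hp0 : 0 < p) (hw : Mem p w) (s : ℝ) :
    |hh p w s| ≤ |s| * bb p ^ p := by
  unfold hh
  rw [abs_mul]
  refine mul_le_mul_of_nonneg_left ?_ (abs_nonneg s)
  rw [abs_of_nonneg (le_trans zero_le_one (hw.one_le_pow hp0 s))]
  exact hw.pow_le hp0 s

lemma hh_intable {p : ℝ} {w : ℝ → ℝ} (hp0 : 0 < p) (hw : Mem p w) (a b : ℝ) :
    IntervalIntegrable (hh p w) volume a b := by
  refine II_of_bdd (hw.hh_meas hp0) (C := (|a| + |b|) * bb p ^ p) fun s hs => ?_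
  refine le_trans (hh_abs_global hp0 hw s) (mul_le_mul_of_nonneg_right ?_ ?_)
  · rw [Set.uIoc] at hs
    rw [abs_le]
    constructor
    · have : min a b ≥ -(|a| + |b|) := le_min (by linarith [neg_abs_le a, abs_nonneg b])
        (by linarith [neg_abs_le b, abs_nonneg a])
      linarith [hs.1]
    · have : max a b ≤ |a| + |b| := max_le (by linarith [le_abs_self a, abs_nonneg b])
        (by linarith [le_abs_self b, abs_nonneg a])
      linarith [hs.2]
  · exact bbp_pos.le

lemma uIoc_sub {x y : ℝ} (h0 : 0 ≤ x) (h2 : x ≤ 2) (h0' : 0 ≤ y) (h2' : y ≤ 2) :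
    Set.uIoc x y ⊆ Set.Icc 0 2 := fun s hs =>
  ⟨le_trans (le_min h0 h0') hs.1.le, le_trans hs.2 (max_le h2 h2')⟩

lemma mul_hh_intable {p : ℝ} {w : ℝ → ℝ} (hp0 : 0 < p) (hw : Mem p w) {g : ℝ → ℝ} {C a b : ℝ}
    (hg : Measurable g) (hgC : ∀ s ∈ Set.uIoc a b, |g s| ≤ C)
    (hsub : Set.uIoc a b ⊆ Set.Icc 0 2) :
    IntervalIntegrable (fun s => g s * hh p w s) volume a b := by
  refine II_of_bdd (hg.mul (hw.hh_meas hp0)) (C := C * (2 * bb p ^ p)) fun s hs => ?_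
  rw [abs_mul]
  have h1 : |hh p w s| ≤ 2 * bb p ^ p := by
    refine le_trans (hh_abs_global hp0 hw s) (mul_le_mul_of_nonneg_right ?_ bbp_pos.le)
    rw [abs_of_nonneg (hsub hs).1]
    exact (hsub hs).2
  calc |g s| * |hh p w s| ≤ |g s| * (2 * bb p ^ p) :=
        mul_le_mul_of_nonneg_left h1 (abs_nonneg _)
  _ ≤ C * (2 * bb p ^ p) := mul_le_mul_of_nonneg_right (hgC s hs) (mul_nonneg two_pos.le bbp_pos.le)
lemma mm_meas : Measurable mm :=
  Measurable.ite (measurableSet_le measurable_id measurable_const) (by fun_prop) measurable_const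
lemma mm2_meas : Measurable mm2 :=
  Measurable.ite (measurableSet_le measurable_id measurable_const) (by fun_prop) measurable_const
lemma nn_meas (t : ℝ) : Measurable (nn t) :=
  Measurable.ite (measurableSet_le measurable_id measurable_const) (by fun_prop) measurable_const

lemma mm_le {s : ℝ} (hs : 0 ≤ s) : |mm s| ≤ 3/2 := by
  rw [abs_of_nonneg mm_nonneg]; unfold mm; split <;> linarith
lemma mm2_le {s : ℝ} (hs : 0 ≤ s) : |mm2 s| ≤ 9/8 := by
  rw [abs_of_nonneg mm2_nonneg]; unfold mm2; split <;> nlinarith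
lemma nn_le {t s : ℝ} (ht : t ≤ 2) (hs : 0 ≤ s) : |nn t s| ≤ 2 := by
  rw [abs_of_nonneg nn_nonneg]; unfold nn; split <;> linarith

lemma I1_rep {p : ℝ} {w : ℝ → ℝ} (hp0 : 0 < p) (hw : Mem p w) :
    ∫ s in (0:ℝ)..2, mm s * hh p w s = I1 p w := by
  have i1 : IntervalIntegrable (fun s => mm s * hh p w s) volume 0 (3/2) :=
    mul_hh_intable hp0 hw mm_meas (C := 3/2)
      (fun s hs => mm_le (uIoc_sub (by norm_num) (by norm_num) (by norm_num) (by norm_num) hs).1)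
      (uIoc_sub (by norm_num) (by norm_num) (by norm_num) (by norm_num))
  have i2 : IntervalIntegrable (fun s => mm s * hh p w s) volume (3/2) 2 :=
    mul_hh_intable hp0 hw mm_meas (C := 3/2)
      (fun s hs => mm_le (uIoc_sub (by norm_num) (by norm_num) (by norm_num) (by norm_num) hs).1)
      (uIoc_sub (by norm_num) (by norm_num) (by norm_num) (by norm_num))
  rw [← intervalIntegral.integral_add_adjacent_intervals i1 i2]
  have e1 : ∫ s in (0:ℝ)..(3/2), mm s * hh p w s = I1 p w := by
    unfold I1
    apply intervalIntegral.integral_congr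
    intro s hs
    rw [Set.uIcc_of_le (by norm_num)] at hs
    simp only [mm, if_pos hs.2]
  have e2 : ∫ s in (3/2:ℝ)..2, mm s * hh p w s = 0 := by
    rw [show (0:ℝ) = ∫ s in (3/2:ℝ)..2, (0:ℝ) * hh p w s by simp]
    apply intervalIntegral.integral_congr
    intro s hs
    rw [Set.uIcc_of_le (by norm_num)] at hs
    simp only [mm]
    by_cases h : s ≤ 3/2
    · have hs32 : s = 3/2 := le_antisymm h hs.1
      rw [if_pos h, hs32]; norm_num
    · rw [if_neg h]
  rw [e1, e2, add_zero]

lemma Jj_rep {p : ℝ} {w : ℝ → ℝ} (hp0 : 0 < p) (hw : Mem p w) :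
    ∫ s in (0:ℝ)..2, mm2 s * hh p w s = Jj p w := by
  have i1 : IntervalIntegrable (fun s => mm2 s * hh p w s) volume 0 (3/2) :=
    mul_hh_intable hp0 hw mm2_meas (C := 9/8)
      (fun s hs => mm2_le (uIoc_sub (by norm_num) (by norm_num) (by norm_num) (by norm_num) hs).1)
      (uIoc_sub (by norm_num) (by norm_num) (by norm_num) (by norm_num))
  have i2 : IntervalIntegrable (fun s => mm2 s * hh p w s) volume (3/2) 2 :=
    mul_hh_intable hp0 hw mm2_meas (C := 9/8)
      (fun s hs => mm2_le (uIoc_sub (by norm_num) (by norm_num) (by norm_num) (by norm_num) hs).1)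
      (uIoc_sub (by norm_num) (by norm_num) (by norm_num) (by norm_num))
  rw [← intervalIntegral.integral_add_adjacent_intervals i1 i2]
  have e1 : ∫ s in (0:ℝ)..(3/2), mm2 s * hh p w s = Jj p w := by
    unfold Jj
    apply intervalIntegral.integral_congr
    intro s hs
    rw [Set.uIcc_of_le (by norm_num)] at hs
    simp only [mm2, if_pos hs.2]
  have e2 : ∫ s in (3/2:ℝ)..2, mm2 s * hh p w s = 0 := by
    rw [show (0:ℝ) = ∫ s in (3/2:ℝ)..2, (0:ℝ) * hh p w s by simp]
    apply intervalIntegral.integral_congr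
    intro s hs
    rw [Set.uIcc_of_le (by norm_num)] at hs
    simp only [mm2]
    by_cases h : s ≤ 3/2
    · have hs32 : s = 3/2 := le_antisymm h hs.1
      rw [if_pos h, hs32]; norm_num
    · rw [if_neg h]
  rw [e1, e2, add_zero]

lemma nn_rep {p : ℝ} {w : ℝ → ℝ} (hp0 : 0 < p) (hw : Mem p w) {t : ℝ}
    (ht : t ∈ Set.Icc (0:ℝ) 2) :
    ∫ s in (0:ℝ)..2, nn t s * hh p w s = ∫ s in (0:ℝ)..t, (t - s) * hh p w s := by
  obtain ⟨ht0, ht2⟩ := ht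
  have i1 : IntervalIntegrable (fun s => nn t s * hh p w s) volume 0 t :=
    mul_hh_intable hp0 hw (nn_meas t) (C := 2)
      (fun s hs => nn_le ht2 (uIoc_sub (by norm_num) (by norm_num) ht0 ht2 hs).1)
      (uIoc_sub (by norm_num) (by norm_num) ht0 ht2)
  have i2 : IntervalIntegrable (fun s => nn t s * hh p w s) volume t 2 :=
    mul_hh_intable hp0 hw (nn_meas t) (C := 2)
      (fun s hs => nn_le ht2 (uIoc_sub ht0 ht2 (by norm_num) (by norm_num) hs).1)
      (uIoc_sub ht0 ht2 (by norm_num) (by norm_num))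
  rw [← intervalIntegral.integral_add_adjacent_intervals i1 i2]
  have e1 : ∫ s in (0:ℝ)..t, nn t s * hh p w s = ∫ s in (0:ℝ)..t, (t - s) * hh p w s := by
    apply intervalIntegral.integral_congr
    intro s hs
    rw [Set.uIcc_of_le ht0] at hs
    simp only [nn, if_pos hs.2]
  have e2 : ∫ s in t..2, nn t s * hh p w s = 0 := by
    rw [show (0:ℝ) = ∫ s in t..2, (0:ℝ) * hh p w s by simp]
    apply intervalIntegral.integral_congr
    intro s hs
    rw [Set.uIcc_of_le ht2] at hs
    simp only [nn]
    by_cases h : s ≤ t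
    · have hst : s = t := le_antisymm h hs.1
      rw [if_pos h, hst]; norm_num
    · rw [if_neg h]
  rw [e1, e2, add_zero]
lemma Tt_rep {p : ℝ} {w : ℝ → ℝ} (hp0 : 0 < p) (hw : Mem p w) {t : ℝ}
    (ht : t ∈ Set.Icc (0:ℝ) 2) :
    Tt p w t = ∫ s in (0:ℝ)..2, Kk t s * hh p w s := by
  obtain ⟨ht0, ht2⟩ := ht
  have hsub : Set.uIoc (0:ℝ) 2 ⊆ Set.Icc 0 2 :=
    uIoc_sub (by norm_num) (by norm_num) (by norm_num) (by norm_num)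
  have iA : IntervalIntegrable (fun s => (2 - s) * hh p w s) volume 0 2 :=
    mul_hh_intable hp0 hw (measurable_const.sub measurable_id) (C := 2)
      (fun s hs => by rw [abs_of_nonneg (by linarith [(hsub hs).2])]; linarith [(hsub hs).1]) hsub
  have iB : IntervalIntegrable (fun s => mm2 s * hh p w s) volume 0 2 :=
    mul_hh_intable hp0 hw mm2_meas (C := 9/8) (fun s hs => mm2_le (hsub hs).1) hsub
  have iC : IntervalIntegrable (fun s => mm s * hh p w s) volume 0 2 :=
    mul_hh_intable hp0 hw mm_meas (C := 3/2) (fun s hs => mm_le (hsub hs).1) hsub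
  have iD : IntervalIntegrable (fun s => nn t s * hh p w s) volume 0 2 :=
    mul_hh_intable hp0 hw (nn_meas t) (C := 2) (fun s hs => nn_le ht2 (hsub hs).1) hsub
  have key : Set.EqOn (fun s => Kk t s * hh p w s)
      (fun s => (((((3/2+t)*8) * ((2 - s) * hh p w s)
        - ((3/2+t)*8) * (mm2 s * hh p w s))
        - ((3/2+t)*4) * (mm s * hh p w s))
        - mm s * hh p w s)
        - nn t s * hh p w s) (Set.uIcc 0 2) := fun s _ => by unfold Kk; ring
  have j1 : IntervalIntegrable (fun s => ((3/2+t)*8) * ((2 - s) * hh p w s)) volume 0 2 :=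
    iA.const_mul _
  have j2 : IntervalIntegrable (fun s => ((3/2+t)*8) * (mm2 s * hh p w s)) volume 0 2 :=
    iB.const_mul _
  have j3 : IntervalIntegrable (fun s => ((3/2+t)*4) * (mm s * hh p w s)) volume 0 2 :=
    iC.const_mul _
  rw [intervalIntegral.integral_congr key,
    intervalIntegral.integral_sub (((j1.sub j2).sub j3).sub iC) iD,
    intervalIntegral.integral_sub ((j1.sub j2).sub j3) iC,
    intervalIntegral.integral_sub (j1.sub j2) j3,
    intervalIntegral.integral_sub j1 j2,
    intervalIntegral.integral_const_mul, intervalIntegral.integral_const_mul,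
    intervalIntegral.integral_const_mul,
    I1_rep hp0 hw, Jj_rep hp0 hw, nn_rep hp0 hw ⟨ht0, ht2⟩]
  show Tt p w t = ((3/2+t)*8) * I2 p w - ((3/2+t)*8) * Jj p w - ((3/2+t)*4) * I1 p w
      - I1 p w - ∫ s in (0:ℝ)..t, (t - s) * hh p w s
  unfold Tt Ac Bc
  ring
lemma Kk_hh_intable {p : ℝ} {w : ℝ → ℝ} (hp0 : 0 < p) (hw : Mem p w) {t : ℝ}
    (ht : t ∈ Set.Icc (0:ℝ) 2) :
    IntervalIntegrable (fun s => Kk t s * hh p w s) volume 0 2 := by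
  have hsub : Set.uIoc (0:ℝ) 2 ⊆ Set.Icc 0 2 :=
    uIoc_sub (by norm_num) (by norm_num) (by norm_num) (by norm_num)
  exact mul_hh_intable hp0 hw (Kk_meas t) (C := 56)
    (fun s hs => Kk_abs_le ht (hsub hs)) hsub

lemma Tt_mono {p : ℝ} {w v : ℝ → ℝ} (hp0 : 0 < p) (hw : Mem p w) (hv : Mem p v)
    (hwv : ∀ s, w s ≤ v s) {t : ℝ} (ht : t ∈ Set.Icc (0:ℝ) 2) :
    Tt p w t ≤ Tt p v t := by
  rw [Tt_rep hp0 hw ht, Tt_rep hp0 hv ht]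
  refine intervalIntegral.integral_mono_on (by norm_num) (Kk_hh_intable hp0 hw ht)
    (Kk_hh_intable hp0 hv ht) fun s hs => ?_
  refine mul_le_mul_of_nonneg_left ?_ (Kk_nonneg ht hs)
  exact mul_le_mul_of_nonneg_left
    (Real.rpow_le_rpow (le_trans zero_le_one (hw.2 s).1) (hwv s) hp0.le) hs.1

lemma Tt_lb {p : ℝ} {w : ℝ → ℝ} (hp0 : 0 < p) (hw : Mem p w) {t : ℝ}
    (ht : t ∈ Set.Icc (0:ℝ) 2) : 1 ≤ Tt p w t := by
  rw [Tt_rep hp0 hw ht]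
  have hmeas : Measurable fun s : ℝ => if s ≤ 3/2 then s * s else 0 :=
    Measurable.ite (measurableSet_le measurable_id measurable_const) (by fun_prop)
      measurable_const
  have ilow : IntervalIntegrable (fun s : ℝ => if s ≤ 3/2 then s * s else 0) volume 0 2 := by
    refine II_of_bdd hmeas (C := 9/4) fun s hs => ?_
    have hs' := uIoc_sub (by norm_num) (by norm_num) (by norm_num) (by norm_num) hs
    split
    · rw [abs_of_nonneg (mul_nonneg hs'.1 hs'.1)]; nlinarith [hs'.1, ‹s ≤ 3/2›]
    · norm_num
  have key : ∫ s in (0:ℝ)..2, (if s ≤ 3/2 then s * s else 0)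
      ≤ ∫ s in (0:ℝ)..2, Kk t s * hh p w s := by
    refine intervalIntegral.integral_mono_on (by norm_num) ilow (Kk_hh_intable hp0 hw ht)
      fun s hs => ?_
    have h1 := Kk_lower ht hs
    have h2 := hh_lb hp0 hw hs.1
    have h3 := Kk_nonneg ht hs
    split
    · rename_i hs32
      rw [if_pos hs32] at h1
      exact mul_le_mul h1 h2 hs.1 h3
    · exact mul_nonneg h3 (hh_nonneg hp0 hw hs.1)
  have comp : ∫ s in (0:ℝ)..2, (if s ≤ 3/2 then s * s else 0) = (9/8 : ℝ) := by
    have i1 : IntervalIntegrable (fun s : ℝ => if s ≤ 3/2 then s * s else 0) volume 0 (3/2) := by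
      refine ilow.mono_set ?_
      rw [Set.uIcc_of_le (by norm_num : (0:ℝ) ≤ 3/2), Set.uIcc_of_le (by norm_num : (0:ℝ) ≤ 2)]
      exact Set.Icc_subset_Icc le_rfl (by norm_num)
    have i2 : IntervalIntegrable (fun s : ℝ => if s ≤ 3/2 then s * s else 0) volume (3/2) 2 := by
      refine ilow.mono_set ?_
      rw [Set.uIcc_of_le (by norm_num : (3/2:ℝ) ≤ 2), Set.uIcc_of_le (by norm_num : (0:ℝ) ≤ 2)]
      exact Set.Icc_subset_Icc (by norm_num) le_rfl
    rw [← intervalIntegral.integral_add_adjacent_intervals i1 i2]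
    have e1 : ∫ s in (0:ℝ)..(3/2), (if s ≤ 3/2 then s * s else 0) = (9/8:ℝ) := by
      rw [intervalIntegral.integral_congr (g := fun s => s ^ 2)
        (fun s hs => by
          rw [Set.uIcc_of_le (by norm_num)] at hs
          simp only [if_pos hs.2]; ring)]
      rw [integral_pow]; norm_num
    have e2 : ∫ s in (3/2:ℝ)..2, (if s ≤ 3/2 then s * s else 0)
        = ∫ s in (3/2:ℝ)..2, (0:ℝ) := by
      apply intervalIntegral.integral_congr_ae
      filter_upwards with s hs
      rw [Set.uIoc_of_le (by norm_num)] at hs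
      show (if s ≤ 3/2 then s * s else 0) = 0
      rw [if_neg (not_le.2 hs.1)]
    rw [e1, e2]; simp
  rw [comp] at key
  linarith
lemma Tt_ub {p : ℝ} {w : ℝ → ℝ} (hp0 : 0 < p) (hp1 : p < 1) (hw : Mem p w) {t : ℝ}
    (ht : t ∈ Set.Icc (0:ℝ) 2) : Tt p w t ≤ bb p := by
  rw [Tt_rep hp0 hw ht]
  set c := bb p ^ p with hc
  have hcpos : (0:ℝ) < c := bbp_pos
  have iup : IntervalIntegrable (fun s : ℝ => 28 * (2 - s) * (s * c)) volume 0 2 :=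
    (Continuous.intervalIntegrable (by fun_prop) _ _)
  have key : ∫ s in (0:ℝ)..2, Kk t s * hh p w s ≤ ∫ s in (0:ℝ)..2, 28 * (2 - s) * (s * c) := by
    refine intervalIntegral.integral_mono_on (by norm_num) (Kk_hh_intable hp0 hw ht) iup
      fun s hs => ?_
    refine mul_le_mul (Kk_le ht hs) (hh_ub hp0 hw hs.1) (hh_nonneg hp0 hw hs.1) ?_
    nlinarith [hs.2]
  have comp : ∫ s in (0:ℝ)..2, 28 * (2 - s) * (s * c) = 112/3 * c := by
    rw [intervalIntegral.integral_congr (g := fun s => (56 * c) * s - (28 * c) * s ^ 2)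
      (fun s _ => by ring)]
    rw [intervalIntegral.integral_sub ((Continuous.intervalIntegrable (by fun_prop) _ _))
      ((Continuous.intervalIntegrable (by fun_prop) _ _)),
      intervalIntegral.integral_const_mul, intervalIntegral.integral_const_mul,
      integral_id, integral_pow]
    norm_num; ring
  rw [comp] at key
  have : (112/3 : ℝ) * c ≤ 38 * c := by nlinarith
  calc ∫ s in (0:ℝ)..2, Kk t s * hh p w s ≤ 38 * c := le_trans key this
  _ = bb p := bb_eq hp0 hp1
lemma abs_le_uIoc {a b s : ℝ} (hs : s ∈ Set.uIoc a b) : |s| ≤ |a| + |b| := by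
  rw [Set.uIoc] at hs
  rw [abs_le]
  constructor
  · have : -(|a| + |b|) ≤ min a b := le_min (by linarith [neg_abs_le a, abs_nonneg b])
      (by linarith [neg_abs_le b, abs_nonneg a])
    linarith [hs.1]
  · have : max a b ≤ |a| + |b| := max_le (by linarith [le_abs_self a, abs_nonneg b])
      (by linarith [le_abs_self b, abs_nonneg a])
    linarith [hs.2]

lemma id_mul_hh_intable {p : ℝ} {w : ℝ → ℝ} (hp0 : 0 < p) (hw : Mem p w) (a b : ℝ) :
    IntervalIntegrable (fun s => s * hh p w s) volume a b := by
  refine II_of_bdd (measurable_id.mul (hw.hh_meas hp0))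
    (C := (|a| + |b|) * ((|a| + |b|) * bb p ^ p)) fun s hs => ?_
  rw [abs_mul]
  have h1 := abs_le_uIoc hs
  have h2 : |hh p w s| ≤ (|a| + |b|) * bb p ^ p :=
    le_trans (hh_abs_global hp0 hw s) (mul_le_mul_of_nonneg_right h1 bbp_pos.le)
  exact mul_le_mul h1 h2 (abs_nonneg _) (by positivity)

lemma W_eq {p : ℝ} {w : ℝ → ℝ} (hp0 : 0 < p) (hw : Mem p w) (t : ℝ) :
    ∫ s in (0:ℝ)..t, (t - s) * hh p w s
      = t * (∫ s in (0:ℝ)..t, hh p w s) - ∫ s in (0:ℝ)..t, s * hh p w s := by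
  rw [← intervalIntegral.integral_const_mul,
    ← intervalIntegral.integral_sub ((hh_intable hp0 hw 0 t).const_mul t)
      (id_mul_hh_intable hp0 hw 0 t)]
  apply intervalIntegral.integral_congr
  intro s _
  ring

lemma Tt_cont {p : ℝ} {w : ℝ → ℝ} (hp0 : 0 < p) (hw : Mem p w) : Continuous (Tt p w) := by
  have cP : Continuous fun t => ∫ s in (0:ℝ)..t, hh p w s :=
    intervalIntegral.continuous_primitive (fun a b => hh_intable hp0 hw a b) 0
  have cQ : Continuous fun t => ∫ s in (0:ℝ)..t, s * hh p w s :=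
    intervalIntegral.continuous_primitive (fun a b => id_mul_hh_intable hp0 hw a b) 0
  have : Tt p w = fun t => Ac p w + Bc p w * t
      - (t * (∫ s in (0:ℝ)..t, hh p w s) - ∫ s in (0:ℝ)..t, s * hh p w s) := by
    funext t
    unfold Tt
    rw [W_eq hp0 hw t]
  rw [this]
  exact (continuous_const.add (continuous_const.mul continuous_id)).sub
    ((continuous_id.mul cP).sub cQ)

lemma cl_cont : Continuous cl := continuous_const.max (continuous_const.min continuous_id)
lemma cl_mem (t : ℝ) : cl t ∈ Set.Icc (0:ℝ) 2 :=
  ⟨le_max_left _ _, max_le (by norm_num) (min_le_left _ _)⟩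
lemma cl_eq {t : ℝ} (ht : t ∈ Set.Icc (0:ℝ) 2) : cl t = t := by
  unfold cl
  rw [min_eq_right ht.2, max_eq_right ht.1]

lemma seqU_mem {p : ℝ} (hp0 : 0 < p) (hp1 : p < 1) :
    ∀ n, Mem p (seqU p n) ∧ Continuous (seqU p n) := by
  intro n
  induction n with
  | zero =>
    refine ⟨⟨measurable_const, fun t => ⟨le_rfl, bb_one_le hp0 hp1⟩⟩, continuous_const⟩
  | succ n ih =>
    have hc : Continuous (seqU p (n+1)) := (Tt_cont hp0 ih.1).comp cl_cont
    exact ⟨⟨hc.measurable, fun t => ⟨Tt_lb hp0 ih.1 (cl_mem t), Tt_ub hp0 hp1 ih.1 (cl_mem t)⟩⟩, hc⟩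

lemma seqU_mono {p : ℝ} (hp0 : 0 < p) (hp1 : p < 1) :
    ∀ n t, seqU p n t ≤ seqU p (n+1) t := by
  intro n
  induction n with
  | zero => exact fun t => Tt_lb hp0 (seqU_mem hp0 hp1 0).1 (cl_mem t)
  | succ n ih =>
    intro t
    exact Tt_mono hp0 (seqU_mem hp0 hp1 n).1 (seqU_mem hp0 hp1 (n+1)).1 ih (cl_mem t)

lemma seqU_bdd {p : ℝ} (hp0 : 0 < p) (hp1 : p < 1) (t : ℝ) :
    BddAbove (Set.range fun n => seqU p n t) := by
  refine ⟨bb p, ?_⟩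
  rintro x ⟨n, rfl⟩
  exact ((seqU_mem hp0 hp1 n).1.2 t).2

lemma ustar_mem {p : ℝ} (hp0 : 0 < p) (hp1 : p < 1) : Mem p (ustar p) := by
  refine ⟨Measurable.iSup (fun n => (seqU_mem hp0 hp1 n).2.measurable), fun t => ?_⟩
  constructor
  · exact le_trans (((seqU_mem hp0 hp1 0).1.2 t).1) (le_ciSup (seqU_bdd hp0 hp1 t) 0)
  · exact ciSup_le fun n => ((seqU_mem hp0 hp1 n).1.2 t).2

lemma ustar_tendsto {p : ℝ} (hp0 : 0 < p) (hp1 : p < 1) (t : ℝ) :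
    Filter.Tendsto (fun n => seqU p n t) Filter.atTop (nhds (ustar p t)) :=
  tendsto_atTop_ciSup (monotone_nat_of_le_succ fun n => seqU_mono hp0 hp1 n t)
    (seqU_bdd hp0 hp1 t)
lemma ustar_fixed {p : ℝ} (hp0 : 0 < p) (hp1 : p < 1) {t : ℝ} (ht : t ∈ Set.Icc (0:ℝ) 2) :
    ustar p t = Tt p (ustar p) t := by
  have h1 : Filter.Tendsto (fun n => seqU p (n+1) t) Filter.atTop (nhds (ustar p t)) :=
    (ustar_tendsto hp0 hp1 t).comp (Filter.tendsto_add_atTop_nat 1)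
  have h2 : ∀ n, seqU p (n+1) t = ∫ s in Set.Ioc (0:ℝ) 2, Kk t s * hh p (seqU p n) s := by
    intro n
    show Tt p (seqU p n) (cl t) = _
    rw [cl_eq ht, Tt_rep hp0 (seqU_mem hp0 hp1 n).1 ht,
      intervalIntegral.integral_of_le (by norm_num : (0:ℝ) ≤ 2)]
  have h3 : Filter.Tendsto (fun n => ∫ s in Set.Ioc (0:ℝ) 2, Kk t s * hh p (seqU p n) s)
      Filter.atTop (nhds (∫ s in Set.Ioc (0:ℝ) 2, Kk t s * hh p (ustar p) s)) := by
    refine MeasureTheory.tendsto_integral_of_dominated_convergence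
      (bound := fun _ => 56 * (2 * bb p ^ p))
      (fun n => (((Kk_meas t).mul ((seqU_mem hp0 hp1 n).1.hh_meas hp0)).aestronglyMeasurable).restrict)
      ((integrableOn_const measure_Ioc_lt_top.ne))
      (fun n => ?_) ?_
    · rw [MeasureTheory.ae_restrict_iff' measurableSet_Ioc]
      refine Filter.Eventually.of_forall fun s hs => ?_
      have hs' : s ∈ Set.Icc (0:ℝ) 2 := Set.Ioc_subset_Icc_self hs
      rw [Real.norm_eq_abs, abs_mul]
      have hK := Kk_abs_le ht hs'
      have hH : |hh p (seqU p n) s| ≤ 2 * bb p ^ p := by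
        refine le_trans (hh_abs_global hp0 (seqU_mem hp0 hp1 n).1 s) ?_
        refine mul_le_mul_of_nonneg_right ?_ bbp_pos.le
        rw [abs_of_nonneg hs'.1]; exact hs'.2
      calc |Kk t s| * |hh p (seqU p n) s| ≤ 56 * |hh p (seqU p n) s| :=
            mul_le_mul_of_nonneg_right hK (abs_nonneg _)
      _ ≤ 56 * (2 * bb p ^ p) := by
            refine mul_le_mul_of_nonneg_left hH (by norm_num)
    · refine Filter.Eventually.of_forall fun s => ?_
      have hne : ustar p s ≠ 0 := by
        have := (ustar_mem hp0 hp1).2 s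
        intro h; rw [h] at this; exact absurd this.1 (by norm_num)
      have : Filter.Tendsto (fun n => (seqU p n s) ^ p) Filter.atTop
          (nhds ((ustar p s) ^ p)) :=
        (ustar_tendsto hp0 hp1 s).rpow_const (Or.inl hne)
      exact ((this.const_mul s).const_mul (Kk t s))
  have h4 := h3.congr' (Filter.Eventually.of_forall fun n => (h2 n).symm)
  exact tendsto_nhds_unique h1 h4 |>.trans
    (by rw [Tt_rep hp0 (ustar_mem hp0 hp1) ht,
      intervalIntegral.integral_of_le (by norm_num : (0:ℝ) ≤ 2)])
theorem stmt_11 (p : ℝ) (hp0 : 0 < p) (hp1 : p < 1) :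
    ∃ u u' u'' : ℝ → ℝ,
      (∀ t ∈ Set.Icc (0:ℝ) 2, HasDerivWithinAt u (u' t) (Set.Icc 0 2) t) ∧
      (∀ t ∈ Set.Icc (0:ℝ) 2, HasDerivWithinAt u' (u'' t) (Set.Icc 0 2) t) ∧
      ContinuousOn u'' (Set.Icc 0 2) ∧
      (∀ t ∈ Set.Ioo (0:ℝ) 2, u'' t + t * u t ^ p = 0) ∧
      u 0 = (1 / 2) * u (3 / 2) ∧
      u 2 = (∫ s in (0:ℝ)..(3 / 2), u s) ∧
      (∀ t ∈ Set.Ioo (0:ℝ) 2, 0 < u t) := by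
  have hus : Mem p (ustar p) := ustar_mem hp0 hp1
  set us := ustar p with hus_def
  set u : ℝ → ℝ := Tt p us with hu_def
  have hfix : ∀ t ∈ Set.Icc (0:ℝ) 2, u t = us t :=
    fun t ht => (ustar_fixed hp0 hp1 ht).symm
  have hcu : Continuous u := Tt_cont hp0 hus
  set hh' : ℝ → ℝ := fun s => s * u s ^ p with hh'_def
  have hch : Continuous hh' := continuous_id.mul (hcu.rpow_const fun _ => Or.inr hp0.le)
  have heq : ∀ s ∈ Set.Icc (0:ℝ) 2, hh' s = hh p us s := by
    intro s hs
    simp only [hh'_def, hh]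
    rw [hfix s hs]
  -- primitives
  set P : ℝ → ℝ := fun t => ∫ s in (0:ℝ)..t, hh' s with hP_def
  set Q : ℝ → ℝ := fun t => ∫ s in (0:ℝ)..t, s * hh' s with hQ_def
  set R : ℝ → ℝ := fun t => ∫ s in (0:ℝ)..t, s^2 * hh' s with hR_def
  have hPd : ∀ t, HasDerivAt P (hh' t) t :=
    fun t => (hch.integral_hasStrictDerivAt 0 t).hasDerivAt
  have hQd : ∀ t, HasDerivAt Q (t * hh' t) t :=
    fun t => ((continuous_id.mul hch).integral_hasStrictDerivAt 0 t).hasDerivAt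
  have hRd : ∀ t, HasDerivAt R (t^2 * hh' t) t :=
    fun t => (((continuous_id.pow 2).mul hch).integral_hasStrictDerivAt 0 t).hasDerivAt
  set A := Ac p us with hA_def
  set B := Bc p us with hB_def
  set v : ℝ → ℝ := fun t => A + B * t - (t * P t - Q t) with hv_def
  have hvd : ∀ t, HasDerivAt v (B - P t) t := by
    intro t
    have h1 : HasDerivAt (fun t => A + B * t) B t := by
      exact ((hasDerivAt_const t A).add ((hasDerivAt_id t).const_mul B)).congr_deriv (by simp)
    have h2 : HasDerivAt (fun t => t * P t) (P t + t * hh' t) t := by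
      exact ((hasDerivAt_id t).mul (hPd t)).congr_deriv (by simp)
    have := h1.sub (h2.sub (hQd t))
    exact this.congr_deriv (by ring)
  have hcv : Continuous v := by
    rw [continuous_iff_continuousAt]; exact fun t => (hvd t).continuousAt
  have huv : ∀ t ∈ Set.Icc (0:ℝ) 2, u t = v t := by
    intro t ht
    have e1 : u t = A + B * t - ∫ s in (0:ℝ)..t, (t - s) * hh p us s := rfl
    have e2 : ∫ s in (0:ℝ)..t, hh p us s = P t := by
      apply intervalIntegral.integral_congr
      intro s hs
      rw [Set.uIcc_of_le ht.1] at hs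
      exact (heq s ⟨hs.1, le_trans hs.2 ht.2⟩).symm
    have e3 : ∫ s in (0:ℝ)..t, s * hh p us s = Q t := by
      apply intervalIntegral.integral_congr
      intro s hs
      rw [Set.uIcc_of_le ht.1] at hs
      show s * hh p us s = s * hh' s
      rw [heq s ⟨hs.1, le_trans hs.2 ht.2⟩]
    rw [e1, W_eq hp0 hus t, e2, e3]
  set u' : ℝ → ℝ := fun t => B - P t with hu'_def
  set u'' : ℝ → ℝ := fun t => -(t * u t ^ p) with hu''_def
  refine ⟨u, u', u'', ?_, ?_, ?_, ?_, ?_, ?_, ?_⟩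
  · intro t ht
    exact ((hvd t).hasDerivWithinAt).congr (fun y hy => huv y hy) (huv t ht)
  · intro t _
    have : HasDerivAt u' (-(t * u t ^ p)) t := by
      have := (hasDerivAt_const t B).sub (hPd t)
      exact this.congr_deriv (by simp only [hh'_def]; ring)
    exact this.hasDerivWithinAt
  · exact (hch.neg).continuousOn
  · intro t _
    show -(t * u t ^ p) + t * u t ^ p = 0
    ring
  · -- u 0 = 1/2 * u (3/2)
    have h0 : u 0 = A := by
      show A + B * 0 - ∫ s in (0:ℝ)..0, (0 - s) * hh p us s = A
      rw [intervalIntegral.integral_same]; ring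
    have h32 : u (3/2) = A + B * (3/2) - I1 p us := rfl
    have hA : A = 3/2 * B - I1 p us := rfl
    rw [h0, h32]
    linarith
  · -- u 2 = ∫₀^{3/2} u
    have h2 : u 2 = A + B * 2 - I2 p us := rfl
    set Φ : ℝ → ℝ := fun t => t^2/2 * P t - t * Q t + (1/2) * R t with hΦ_def
    set Ψ : ℝ → ℝ := fun t => A * t + B * (t^2/2) - Φ t with hΨ_def
    have hΨd : ∀ t, HasDerivAt Ψ (v t) t := by
      intro t
      have hΦd : HasDerivAt Φ (t * P t - Q t) t := by
        have d1 : HasDerivAt (fun t : ℝ => t^2/2 * P t) (t * P t + t^2/2 * hh' t) t := by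
          have : HasDerivAt (fun t : ℝ => t^2/2) t t := by
            simpa using ((hasDerivAt_pow 2 t).div_const 2)
          exact this.mul (hPd t)
        have d2 : HasDerivAt (fun t : ℝ => t * Q t) (Q t + t * (t * hh' t)) t := by
          exact ((hasDerivAt_id t).mul (hQd t)).congr_deriv (by simp)
        have := (d1.sub d2).add ((hRd t).const_mul (1/2:ℝ))
        exact this.congr_deriv (by ring)
      have dA : HasDerivAt (fun t : ℝ => A * t + B * (t^2/2)) (A + B * t) t := by
        have b1 : HasDerivAt (fun t : ℝ => t^2/2) t t := by
          simpa using ((hasDerivAt_pow 2 t).div_const 2)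
        exact (((hasDerivAt_id t).const_mul A).add (b1.const_mul B)).congr_deriv (by simp)
      exact dA.sub hΦd
    have hint : ∫ s in (0:ℝ)..(3/2), v s = Ψ (3/2) - Ψ 0 :=
      intervalIntegral.integral_eq_sub_of_hasDerivAt (fun x _ => hΨd x)
        (hcv.intervalIntegrable _ _)
    have hΨ0 : Ψ 0 = 0 := by
      simp only [hΨ_def, hΦ_def, hP_def, hQ_def, hR_def]
      rw [intervalIntegral.integral_same]
      norm_num
    have huint : ∫ s in (0:ℝ)..(3/2), u s = ∫ s in (0:ℝ)..(3/2), v s := by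
      apply intervalIntegral.integral_congr
      intro s hs
      rw [Set.uIcc_of_le (by norm_num : (0:ℝ) ≤ 3/2)] at hs
      exact huv s ⟨hs.1, le_trans hs.2 (by norm_num)⟩
    -- JJ = Φ (3/2)
    have hJ : Jj p us = Φ (3/2) := by
      have s1 : Jj p us = ∫ s in (0:ℝ)..(3/2), (3/2 - s)^2/2 * hh' s := by
        unfold Jj
        apply intervalIntegral.integral_congr
        intro s hs
        rw [Set.uIcc_of_le (by norm_num : (0:ℝ) ≤ 3/2)] at hs
        show (3/2 - s)^2/2 * hh p us s = (3/2 - s)^2/2 * hh' s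
        rw [heq s ⟨hs.1, le_trans hs.2 (by norm_num)⟩]
      have s2 : ∫ s in (0:ℝ)..(3/2), (3/2 - s)^2/2 * hh' s
          = ∫ s in (0:ℝ)..(3/2), ((9/8) * hh' s - (3/2) * (s * hh' s) + (1/2) * (s^2 * hh' s)) := by
        apply intervalIntegral.integral_congr
        intro s _
        ring
      have i1 : IntervalIntegrable (fun s : ℝ => (9/8) * hh' s) volume 0 (3/2) :=
        (continuous_const.mul hch).intervalIntegrable _ _
      have i2 : IntervalIntegrable (fun s : ℝ => (3/2) * (s * hh' s)) volume 0 (3/2) :=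
        (continuous_const.mul (continuous_id.mul hch)).intervalIntegrable _ _
      have i3 : IntervalIntegrable (fun s : ℝ => (1/2) * (s^2 * hh' s)) volume 0 (3/2) :=
        (continuous_const.mul ((continuous_id.pow 2).mul hch)).intervalIntegrable _ _
      rw [s1, s2, intervalIntegral.integral_add (i1.sub i2) i3,
        intervalIntegral.integral_sub i1 i2,
        intervalIntegral.integral_const_mul, intervalIntegral.integral_const_mul,
        intervalIntegral.integral_const_mul]
      simp only [hΦ_def]
      norm_num
      rfl
    have hAeq : A = 3/2 * B - I1 p us := rfl
    have hBeq : B = 8 * I2 p us - 8 * Jj p us - 4 * I1 p us := rfl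
    rw [h2, huint, hint, hΨ0]
    simp only [hΨ_def]
    rw [← hJ] at *
    nlinarith [hAeq, hBeq, hJ]
  · intro t ht
    have := hfix t ⟨ht.1.le, ht.2.le⟩
    rw [this]
    exact lt_of_lt_of_le one_pos ((hus.2 t).1)
end
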